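/- arXiv:2210.07785 — 3 statements merged into one kernel-verified Lean document; each statement's English description precedes it below -/
import Mathlib

section
/- Let d ≥ 1 and let 0 ≤ ρ ∈ L¹(ℝ^d) with ∫_{ℝ^d} ρ = N ∈ ℕ, N ≥ 2. Then there exist δ > 0 and a symmetric Borel probability measure ℙ on (ℝ^d)^N whose one-body density equals ρ and such that, ℙ-almost everywhere, |x_j − x_k| ≥ δ for all 1 ≤ j < k ≤ N. -/
open MeasureTheory Filter
open scoped ENNReal BigOperators

noncomputable section

/-- `ℝ^d` with its Euclidean structure. -/
abbrev Pt (d : ℕ) := EuclideanSpace ℝ (Fin d)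

namespace ClDFT

/-- Positive part of an extended real number, as an element of `ℝ≥0∞`. -/
def erealPos (a : EReal) : ℝ≥0∞ := if a = ⊤ then ⊤ else ENNReal.ofReal a.toReal

variable {E : Type*} [NormedAddCommGroup E] [MeasureSpace E]
  [SigmaFinite (volume : Measure E)]

/-- The pairwise interaction `∑_{1 ≤ j < k ≤ N} w(x_j - x_k)`, valued in `EReal`. -/
def pairSum (w : E → EReal) (N : ℕ) (x : Fin N → E) : EReal :=
  ∑ p ∈ Finset.univ.filter (fun p : Fin N × Fin N => p.1 < p.2), w (x p.1 - x p.2)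

/-- Extended-real integral of an extended-real valued function (positive part minus
negative part, both computed as lower Lebesgue integrals). -/
def eIntegral {X : Type*} [MeasurableSpace X] (μ : Measure X) (f : X → EReal) : EReal :=
  ((∫⁻ x, erealPos (f x) ∂μ : ℝ≥0∞) : EReal) -
    ((∫⁻ x, erealPos (-(f x)) ∂μ : ℝ≥0∞) : EReal)

/-- Extended-real integral of a real valued function. -/
def realEIntegral {X : Type*} [MeasurableSpace X] (μ : Measure X) (f : X → ℝ) : EReal :=
  ((∫⁻ x, ENNReal.ofReal (f x) ∂μ : ℝ≥0∞) : EReal) -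
    ((∫⁻ x, ENNReal.ofReal (-(f x)) ∂μ : ℝ≥0∞) : EReal)

/-- A measure on `E^N` is symmetric if it is invariant under permutations of
the `N` coordinates. -/
def SymmetricState {N : ℕ} (P : Measure (Fin N → E)) : Prop :=
  ∀ σ : Equiv.Perm (Fin N), Measure.map (fun x => x ∘ σ) P = P

/-- The one-body density of `P` (the sum of the `N` marginals; for a symmetric state
this is `N` times the first marginal) is (absolutely continuous with) density `ρ`. -/
def HasOneBodyDensity {N : ℕ} (P : Measure (Fin N → E)) (ρ : E → ℝ) : Prop :=
  ∀ A : Set E, MeasurableSet A →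
    ∑ i : Fin N, P {x | x i ∈ A} = ∫⁻ y in A, ENNReal.ofReal (ρ y)

/-- Interaction energy `U_N(P) = ∫ ∑_{j<k} w(x_j-x_k) dP`. -/
def interactionEnergy (w : E → EReal) (N : ℕ) (P : Measure (Fin N → E)) : EReal :=
  eIntegral P (pairSum w N)

/-- Minus the entropy, `-S_N(P) = ∫ P log(N! P)`, equal to `⊤` when `P` is not
absolutely continuous with respect to Lebesgue measure. -/
def negEntropy (N : ℕ) (P : Measure (Fin N → E)) : EReal :=
  sInf { e : EReal | ∃ f : (Fin N → E) → ℝ, Measurable f ∧ (∀ x, 0 ≤ f x) ∧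
      P = volume.withDensity (fun x => ENNReal.ofReal (f x)) ∧
      e = realEIntegral volume (fun x => f x * Real.log (N.factorial * f x)) }

/-- Free energy `F_T(P) = U_N(P) - T S_N(P)`. -/
def freeEnergy (w : E → EReal) (T : ℝ) (N : ℕ) (P : Measure (Fin N → E)) : EReal :=
  interactionEnergy w N P + (T : EReal) * negEntropy N P

/-- Canonical free energy at fixed one-body density,
`F_T[ρ] = inf { F_T(P) : ρ_P = ρ }`. -/
def canFreeEnergy (w : E → EReal) (T : ℝ) (N : ℕ) (ρ : E → ℝ) : EReal :=
  sInf { e : EReal | ∃ P : Measure (Fin N → E), IsProbabilityMeasure P ∧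
     SymmetricState P ∧ HasOneBodyDensity P ρ ∧ e = freeEnergy w T N P }

/-- Zero-temperature canonical energy at fixed one-body density,
`F_0[ρ] = inf { U_N(P) : ρ_P = ρ }`. -/
def canEnergy0 (w : E → EReal) (N : ℕ) (ρ : E → ℝ) : EReal :=
  sInf { e : EReal | ∃ P : Measure (Fin N → E), IsProbabilityMeasure P ∧
     SymmetricState P ∧ HasOneBodyDensity P ρ ∧ e = interactionEnergy w N P }

/-- Assumption (A) on the interaction potential `w`, with a finite exponent
`0 ≤ α < ∞` at the origin: `w` is even, lower semicontinuous, stable with constant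
`κ > 0`, and `w(x) ≤ κ(𝟙(|x|<r₀)(r₀/|x|)^α + 1/(1+|x|^s))` with `s > d`.  The core
term is interpreted in `ℝ≥0∞`, so that it equals `+∞` at `x = 0` when `α > 0`. -/
structure AssumptionA (d : ℕ) (w : E → EReal) (κ r₀ α s : ℝ) : Prop where
  even : ∀ x : E, w (-x) = w x
  lsc : LowerSemicontinuous w
  κ_pos : 0 < κ
  stable : ∀ (N : ℕ) (x : Fin N → E), ((-(κ * N) : ℝ) : EReal) ≤ pairSum w N x
  r₀_nonneg : 0 ≤ r₀
  α_nonneg : 0 ≤ α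
  s_gt : (d : ℝ) < s
  upper : ∀ x : E, w x ≤ ((κ : ℝ) : EReal) *
    ((((if ‖x‖ < r₀ then (ENNReal.ofReal r₀ / ENNReal.ofReal ‖x‖) ^ α else 0)
      + ENNReal.ofReal (1 / (1 + ‖x‖ ^ s)) : ℝ≥0∞)) : EReal)

/-- Assumption (A) with a hard core (`α = ∞`) of range `r₀ > 0`: the upper regularity
bound only constrains `w` outside the ball of radius `r₀`, where it reads
`w(x) ≤ κ/(1+|x|^s)`. -/
structure AssumptionAHard (d : ℕ) (w : E → EReal) (κ r₀ s : ℝ) : Prop where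
  even : ∀ x : E, w (-x) = w x
  lsc : LowerSemicontinuous w
  κ_pos : 0 < κ
  stable : ∀ (N : ℕ) (x : Fin N → E), ((-(κ * N) : ℝ) : EReal) ≤ pairSum w N x
  r₀_pos : 0 < r₀
  s_gt : (d : ℝ) < s
  upper : ∀ x : E, r₀ ≤ ‖x‖ → w x ≤ ((κ * (1 / (1 + ‖x‖ ^ s)) : ℝ) : EReal)

/-- A grand-canonical state: a family of symmetric positive measures `P_n` on `E^n`
with total mass one. -/
structure GCState (E : Type*) [NormedAddCommGroup E] [MeasureSpace E] where
  meas : ∀ n : ℕ, Measure (Fin n → E)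
  symm : ∀ n, SymmetricState (meas n)
  total : ∑' n : ℕ, meas n Set.univ = 1

/-- The one-body density of a grand-canonical state is `ρ`. -/
def GCHasDensity (P : GCState E) (ρ : E → ℝ) : Prop :=
  ∀ A : Set E, MeasurableSet A →
    ∑' n : ℕ, ∑ i : Fin n, P.meas n {x | x i ∈ A} = ∫⁻ y in A, ENNReal.ofReal (ρ y)

/-- Grand-canonical interaction energy `U(P) = ∑_n ∫ ∑_{j<k} w(x_j-x_k) dP_n`. -/
def gcInteraction (w : E → EReal) (P : GCState E) : EReal :=
  ((∑' n : ℕ, ∫⁻ x, erealPos (pairSum w n x) ∂P.meas n : ℝ≥0∞) : EReal) -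
    ((∑' n : ℕ, ∫⁻ x, erealPos (-(pairSum w n x)) ∂P.meas n : ℝ≥0∞) : EReal)

/-- Minus the grand-canonical entropy, `-S(P) = ∑_{n≥0} ∫ P_n log(n! P_n)`
(the `n = 0` term giving `P₀ log P₀`), equal to `⊤` if some `P_n` is not absolutely
continuous with respect to Lebesgue measure. -/
def gcNegEntropy (P : GCState E) : EReal :=
  sInf { e : EReal | ∃ f : ∀ n : ℕ, (Fin n → E) → ℝ,
    (∀ n, Measurable (f n)) ∧ (∀ n x, 0 ≤ f n x) ∧
    (∀ n, P.meas n = volume.withDensity (fun x => ENNReal.ofReal (f n x))) ∧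
    e = ((∑' n : ℕ, ∫⁻ x, ENNReal.ofReal (f n x * Real.log (n.factorial * f n x)) : ℝ≥0∞) : EReal)
      - ((∑' n : ℕ, ∫⁻ x, ENNReal.ofReal (-(f n x * Real.log (n.factorial * f n x))) : ℝ≥0∞) : EReal) }

/-- Grand-canonical free energy `G_T(P) = U(P) - T S(P)`. -/
def gcFreeEnergy (w : E → EReal) (T : ℝ) (P : GCState E) : EReal :=
  gcInteraction w P + (T : EReal) * gcNegEntropy P

/-- Grand-canonical free energy at fixed density `G_T[ρ] = inf { G_T(P) : ρ_P = ρ }`. -/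
def gcFreeEnergyAt (w : E → EReal) (T : ℝ) (ρ : E → ℝ) : EReal :=
  sInf { e : EReal | ∃ P : GCState E, GCHasDensity P ρ ∧ e = gcFreeEnergy w T P }

/-- The local radius `R(x)`: the largest `R` with `∫_{B(x,R)} ρ = 1`. -/
def localRadius (ρ : E → ℝ) (x : E) : ℝ :=
  sSup { r : ℝ | ∫ y in Metric.ball x r, ρ y = 1 }

/-- `R_ρ = min_{x} R(x)`. -/
def minRadius (ρ : E → ℝ) : ℝ := sInf (Set.range (localRadius ρ))

end ClDFT

open ClDFT



open scoped Topology

lemma aux_hyperplane (d : ℕ) (i : Fin d) (t : ℝ) :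
    (volume : Measure (Pt d)) {x | x i = t} = 0 := by
  have h0 : (volume : Measure (Fin d → ℝ)) {y | y i = t} = 0 := by
    rw [volume_pi]; exact Measure.pi_hyperplane (fun _ => (volume : Measure ℝ)) i t
  have hms : MeasurableSet {y : Fin d → ℝ | y i = t} :=
    show MeasurableSet ((fun y : Fin d → ℝ => y i) ⁻¹' {t}) from
      (measurable_pi_apply i) (measurableSet_singleton t)
  have := (EuclideanSpace.volume_preserving_symm_measurableEquiv_toLp (Fin d)).measure_preimage
    hms.nullMeasurableSet
  rw [← h0, ← this]
  rfl

lemma aux_dist_coord {d : ℕ} (i : Fin d) (x y : Pt d) : |x i - y i| ≤ dist x y := by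
  rw [EuclideanSpace.dist_eq]
  have h1 : |x i - y i| = Real.sqrt (dist (x i) (y i) ^ 2) := by
    rw [Real.sqrt_sq_eq_abs, Real.dist_eq, abs_abs]
  rw [h1]
  exact Real.sqrt_le_sqrt (Finset.single_le_sum (f := fun j => dist (x j) (y j) ^ 2)
    (fun j _ => sq_nonneg _) (Finset.mem_univ i))

lemma aux_sum_range_two_mul {M : Type*} [AddCommMonoid M] (n : ℕ) (f : ℕ → M) :
    ∑ k ∈ Finset.range (2 * n), f k = ∑ k ∈ Finset.range n, (f (2 * k) + f (2 * k + 1)) := by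
  induction n with
  | zero => simp
  | succ n ih =>
    rw [Finset.sum_range_succ, ← ih, show 2 * (n + 1) = (2 * n + 1) + 1 by ring,
      Finset.sum_range_succ, Finset.sum_range_succ, add_assoc]

lemma aux_telescope {α : Type*} [MeasurableSpace α] (μ : Measure α) (C : ℕ → Set α)
    (hmeas : ∀ k, MeasurableSet (C k)) (hmono : Monotone C) (h0 : C 0 = ∅)
    {A : Set α} (hA : MeasurableSet A) :
    ∀ m, μ (A ∩ C m) = ∑ k ∈ Finset.range m, μ (A ∩ (C (k + 1) \ C k)) := by
  intro m
  induction m with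
  | zero => simp [h0]
  | succ m ih =>
    rw [Finset.sum_range_succ, ← ih]
    have hsplit : A ∩ C (m + 1) = (A ∩ C m) ∪ (A ∩ (C (m + 1) \ C m)) := by
      ext x
      simp only [Set.mem_inter_iff, Set.mem_union, Set.mem_diff]
      constructor
      · rintro ⟨hA, hC⟩
        by_cases h : x ∈ C m
        · exact Or.inl ⟨hA, h⟩
        · exact Or.inr ⟨hA, hC, h⟩
      · rintro (⟨hA, hC⟩ | ⟨hA, hC, _⟩)
        · exact ⟨hA, hmono (Nat.le_succ m) hC⟩
        · exact ⟨hA, hC⟩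
    rw [hsplit, measure_union (Set.disjoint_left.mpr (fun x hx hx' => hx'.2.2 hx.2))
      (hA.inter ((hmeas (m + 1)).diff (hmeas m)))]

lemma aux_pi_cyl {N : ℕ} {α : Type*} [MeasurableSpace α] (m : Fin N → Measure α)
    [∀ j, SigmaFinite (m j)] (hprob : ∀ j, m j Set.univ = 1) (j : Fin N)
    {A : Set α} (hA : MeasurableSet A) :
    Measure.pi m {x | x j ∈ A} = m j A := by
  have h1 : {x : Fin N → α | x j ∈ A}
      = Set.pi Set.univ (Function.update (fun _ : Fin N => (Set.univ : Set α)) j A) := by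
    rw [Set.univ_pi_update_univ]; rfl
  rw [h1, Measure.pi_pi]
  rw [Fintype.prod_eq_single j (fun l hl => by
    rw [Function.update_of_ne hl]; exact hprob l)]
  rw [Function.update_self]

lemma aux_exists_quantile {α : Type*} [MeasurableSpace α] (μ : Measure α) [IsFiniteMeasure μ]
    {g : α → ℝ} (hg : Measurable g) (hatom : ∀ t : ℝ, μ {x | g x = t} = 0)
    {c : ℝ≥0∞} (hc0 : 0 < c) (hcN : c < μ Set.univ) :
    ∃ t : ℝ, μ {x | g x ≤ t} = c := by
  set G : ℝ → ℝ≥0∞ := fun t => μ {x | g x ≤ t} with hGdef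
  have hGmono : Monotone G := fun a b hab => measure_mono (fun x hx => le_trans hx hab)
  have hms : ∀ t : ℝ, MeasurableSet {x | g x ≤ t} := fun t =>
    show MeasurableSet (g ⁻¹' Set.Iic t) from hg measurableSet_Iic
  -- lower bound point
  obtain ⟨a, ha⟩ : ∃ a : ℝ, G a < c := by
    have hempty : (⋂ n : ℕ, {x | g x ≤ -(n : ℝ)}) = ∅ := by
      ext x
      simp only [Set.mem_iInter, Set.mem_setOf_eq, Set.mem_empty_iff_false, iff_false, not_forall]
      obtain ⟨n, hn⟩ := exists_nat_gt (-(g x))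
      exact ⟨n, by push_neg; linarith⟩
    have h1 : Tendsto (fun n : ℕ => G (-(n : ℝ))) atTop (𝓝 0) := by
      have := tendsto_measure_iInter_atTop (μ := μ)
        (s := fun n : ℕ => {x | g x ≤ -(n : ℝ)})
        (fun n => (hms _).nullMeasurableSet)
        (fun n m hnm x hx => by
          simp only [Set.mem_setOf_eq] at hx ⊢
          have hc : (n : ℝ) ≤ m := Nat.cast_le.mpr hnm
          linarith)
        ⟨0, measure_ne_top μ _⟩
      rw [hempty, measure_empty] at this
      exact this
    obtain ⟨n, hn⟩ := (h1.eventually_lt_const hc0).exists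
    exact ⟨-(n : ℝ), hn⟩
  -- upper bound point
  obtain ⟨b, hb⟩ : ∃ b : ℝ, c < G b := by
    have huniv : (⋃ n : ℕ, {x | g x ≤ (n : ℝ)}) = Set.univ := by
      ext x
      simp only [Set.mem_iUnion, Set.mem_setOf_eq, Set.mem_univ, iff_true]
      obtain ⟨n, hn⟩ := exists_nat_gt (g x)
      exact ⟨n, hn.le⟩
    have h1 : Tendsto (fun n : ℕ => G ((n : ℝ))) atTop (𝓝 (μ Set.univ)) := by
      have := tendsto_measure_iUnion_atTop (μ := μ)
        (s := fun n : ℕ => {x | g x ≤ (n : ℝ)})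
        (fun n m hnm x hx => by
          simp only [Set.mem_setOf_eq] at hx ⊢
          have hc : (n : ℝ) ≤ m := Nat.cast_le.mpr hnm
          linarith)
      rw [huniv] at this
      exact this
    obtain ⟨n, hn⟩ := (h1.eventually_const_lt hcN).exists
    exact ⟨(n : ℝ), hn⟩
  set S : Set ℝ := {t | G t ≤ c} with hSdef
  have hSne : S.Nonempty := ⟨a, ha.le⟩
  have hSbdd : BddAbove S := by
    refine ⟨b, fun t ht => ?_⟩
    by_contra hbt
    push_neg at hbt
    exact absurd (le_trans (hGmono hbt.le) ht) (not_le.mpr hb)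
  set t₀ : ℝ := sSup S with ht₀def
  refine ⟨t₀, le_antisymm ?_ ?_⟩
  · -- G t₀ ≤ c
    have hlt : μ {x | g x < t₀} ≤ c := by
      have hsub : {x | g x < t₀} ⊆ ⋃ n : ℕ, {x | g x ≤ t₀ - 1 / (n + 1)} := by
        intro x hx
        obtain ⟨n, hn⟩ := exists_nat_one_div_lt
          (sub_pos.mpr (show g x < t₀ from hx))
        exact Set.mem_iUnion.mpr ⟨n, by simp only [Set.mem_setOf_eq]; linarith⟩
      refine le_trans (measure_mono hsub) ?_
      have hdir : Monotone (fun n : ℕ => {x | g x ≤ t₀ - 1 / (n + 1 : ℝ)}) := by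
        intro n m hnm x hx
        have : (1 : ℝ) / (m + 1) ≤ 1 / (n + 1) := by
          apply one_div_le_one_div_of_le (by positivity)
          exact_mod_cast Nat.add_le_add_right hnm 1
        simp only [Set.mem_setOf_eq] at hx ⊢
        linarith
      rw [hdir.measure_iUnion]
      refine iSup_le fun n => ?_
      obtain ⟨u, huS, hu⟩ := exists_lt_of_lt_csSup hSne
        (show t₀ - 1 / (n + 1 : ℝ) < t₀ by
          have : (0:ℝ) < 1 / (n + 1) := by positivity
          linarith)
      exact le_trans (hGmono hu.le) huS
    have hsub2 : {x | g x ≤ t₀} ⊆ {x | g x < t₀} ∪ {x | g x = t₀} := by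
      intro x hx
      rcases lt_or_eq_of_le (show g x ≤ t₀ from hx) with h | h
      · exact Or.inl h
      · exact Or.inr h
    calc G t₀ ≤ μ ({x | g x < t₀} ∪ {x | g x = t₀}) := measure_mono hsub2
      _ ≤ μ {x | g x < t₀} + μ {x | g x = t₀} := measure_union_le _ _
      _ ≤ c + 0 := add_le_add hlt (le_of_eq (hatom t₀))
      _ = c := add_zero c
  · -- c ≤ G t₀
    have hiInter : (⋂ n : ℕ, {x | g x ≤ t₀ + 1 / (n + 1)}) = {x | g x ≤ t₀} := by
      ext x
      simp only [Set.mem_iInter, Set.mem_setOf_eq]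
      constructor
      · intro h
        by_contra hgt
        push_neg at hgt
        obtain ⟨n, hn⟩ := exists_nat_one_div_lt (sub_pos.mpr hgt)
        have := h n
        linarith
      · intro h n
        have : (0:ℝ) < 1 / (n + 1) := by positivity
        linarith
    have hanti : Antitone (fun n : ℕ => {x | g x ≤ t₀ + 1 / (n + 1 : ℝ)}) := by
      intro n m hnm x hx
      have : (1 : ℝ) / (m + 1) ≤ 1 / (n + 1) := by
        apply one_div_le_one_div_of_le (by positivity)
        exact_mod_cast Nat.add_le_add_right hnm 1
      simp only [Set.mem_setOf_eq] at hx ⊢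
      linarith
    have h1 : Tendsto (fun n : ℕ => G (t₀ + 1 / (n + 1 : ℝ))) atTop (𝓝 (G t₀)) := by
      have := tendsto_measure_iInter_atTop (μ := μ)
        (s := fun n : ℕ => {x | g x ≤ t₀ + 1 / (n + 1 : ℝ)})
        (fun n => (hms _).nullMeasurableSet) hanti ⟨0, measure_ne_top μ _⟩
      rw [hiInter] at this
      exact this
    refine ge_of_tendsto h1 (Eventually.of_forall fun n => ?_)
    have hnot : t₀ + 1 / (n + 1 : ℝ) ∉ S := by
      intro hmem
      have := le_csSup hSbdd hmem
      have hpos : (0:ℝ) < 1 / (n + 1) := by positivity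
      linarith
    exact (not_le.mp hnot).le


/-- Any nonnegative `ρ ∈ L¹(ℝ^d)` with `∫ρ = N ∈ ℕ`, `N ≥ 2`, is the
one-body density of a symmetric `N`-particle probability measure whose particles stay
at distance at least some `δ > 0` from each other, almost surely. -/
theorem statement0 (d N : ℕ) (hd : 1 ≤ d) (hN : 2 ≤ N)
    (ρ : Pt d → ℝ) (hρ : ∀ x, 0 ≤ ρ x) (hint : Integrable ρ)
    (hmass : ∫ x, ρ x = N) :
    ∃ (δ : ℝ) (P : Measure (Fin N → Pt d)), 0 < δ ∧ IsProbabilityMeasure P ∧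
      SymmetricState P ∧ HasOneBodyDensity P ρ ∧
      ∀ᵐ x ∂P, ∀ j k : Fin N, j ≠ k → δ ≤ dist (x j) (x k) := by
  classical
  have hd0 : 0 < d := hd
  -- a measurable representative of the density
  have hmea : AEMeasurable ρ (volume : Measure (Pt d)) := hint.aemeasurable
  set ρ' : Pt d → ℝ := hmea.mk ρ with hρ'def
  have hρeq : ρ =ᵐ[(volume : Measure (Pt d))] ρ' := hmea.ae_eq_mk
  set μ : Measure (Pt d) := volume.withDensity (fun x => ENNReal.ofReal (ρ' x)) with hμdef
  have hofReal_eq : (fun x => ENNReal.ofReal (ρ x)) =ᵐ[(volume : Measure (Pt d))]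
      (fun x => ENNReal.ofReal (ρ' x)) := hρeq.mono (fun x hx => by dsimp only; rw [hx])
  have hμA : ∀ A : Set (Pt d), MeasurableSet A → μ A = ∫⁻ y in A, ENNReal.ofReal (ρ y) := by
    intro A hA
    rw [hμdef, withDensity_apply _ hA]
    exact (lintegral_congr_ae (ae_restrict_of_ae hofReal_eq)).symm
  have hμuniv : μ Set.univ = ENNReal.ofReal N := by
    rw [hμA Set.univ MeasurableSet.univ, setLIntegral_univ,
      ← ofReal_integral_eq_lintegral_ofReal hint (Filter.Eventually.of_forall hρ), hmass]
  haveI hμfin : IsFiniteMeasure μ := ⟨by rw [hμuniv]; exact ENNReal.ofReal_lt_top⟩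
  set i₀ : Fin d := ⟨0, hd0⟩ with hi₀
  set π : Pt d → ℝ := fun x => x i₀ with hπdef
  have hπmeas : Measurable π := (measurable_pi_apply i₀).comp (WithLp.measurable_ofLp 2 _)
  have hatom : ∀ t : ℝ, μ {x | π x = t} = 0 := fun t =>
    withDensity_absolutelyContinuous (volume : Measure (Pt d)) _ (aux_hyperplane d i₀ t)
  -- quantile points
  have hquant : ∀ k : ℕ, ∃ t : ℝ,
      (1 ≤ k → k + 1 ≤ 2 * N → μ {x | π x ≤ t} = ENNReal.ofReal ((k : ℝ) / 2)) := by
    intro k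
    by_cases hk : 1 ≤ k ∧ k + 1 ≤ 2 * N
    · have hpos : 0 < ENNReal.ofReal ((k : ℝ) / 2) := by
        apply ENNReal.ofReal_pos.mpr
        have h1 : (1 : ℝ) ≤ (k : ℝ) := by exact_mod_cast hk.1
        linarith
      have hlt : ENNReal.ofReal ((k : ℝ) / 2) < μ Set.univ := by
        rw [hμuniv]
        refine (ENNReal.ofReal_lt_ofReal_iff ?_).mpr ?_
        · have : (2 : ℝ) ≤ (N : ℝ) := by exact_mod_cast hN
          linarith
        · have h2 : ((k : ℝ) + 1) ≤ 2 * (N : ℝ) := by exact_mod_cast hk.2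
          linarith
      obtain ⟨t, ht⟩ := aux_exists_quantile μ hπmeas hatom hpos hlt
      exact ⟨t, fun _ _ => ht⟩
    · exact ⟨0, fun h1 h2 => absurd ⟨h1, h2⟩ hk⟩
  choose s hs using hquant
  have hslt : ∀ k : ℕ, 1 ≤ k → k + 2 ≤ 2 * N → s k < s (k + 1) := by
    intro k hk1 hk2
    by_contra hcon
    push_neg at hcon
    have h1 := hs k hk1 (by omega)
    have h2 := hs (k + 1) (by omega) (by omega)
    have hmono : μ {x | π x ≤ s (k + 1)} ≤ μ {x | π x ≤ s k} :=
      measure_mono (fun x hx => le_trans hx hcon)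
    rw [h1, h2] at hmono
    have hle := (ENNReal.ofReal_le_ofReal_iff (by positivity)).mp hmono
    push_cast at hle
    linarith
  -- the sets C k
  set C : ℕ → Set (Pt d) := fun k =>
    if k = 0 then (∅ : Set (Pt d)) else if 2 * N ≤ k then Set.univ else {x | π x ≤ s k}
    with hCdef
  have hC0 : C 0 = ∅ := by simp [hCdef]
  have hCtop : C (2 * N) = Set.univ := by
    simp only [hCdef]
    rw [if_neg (by omega), if_pos le_rfl]
  have hCint : ∀ k, 1 ≤ k → k + 1 ≤ 2 * N → C k = {x | π x ≤ s k} := by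
    intro k h1 h2
    simp only [hCdef]
    rw [if_neg (by omega), if_neg (by omega)]
  have hCmeas : ∀ k, MeasurableSet (C k) := by
    intro k
    simp only [hCdef]
    split_ifs
    · exact MeasurableSet.empty
    · exact MeasurableSet.univ
    · exact hπmeas measurableSet_Iic
  have hCstep : ∀ k, C k ⊆ C (k + 1) := by
    intro k
    rcases Nat.eq_zero_or_pos k with h0 | hpos
    · rw [h0, hC0]; exact Set.empty_subset _
    by_cases h2 : 2 * N ≤ k + 1
    · have huniv : C (k + 1) = Set.univ := by
        simp only [hCdef]; rw [if_neg (by omega), if_pos h2]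
      rw [huniv]; exact Set.subset_univ _
    · rw [hCint k hpos (by omega), hCint (k + 1) (by omega) (by omega)]
      have := hslt k hpos (by omega)
      exact fun x hx => le_trans hx this.le
  have hCmono : Monotone C := monotone_nat_of_le_succ hCstep
  have hCmass : ∀ k, k ≤ 2 * N → μ (C k) = ENNReal.ofReal ((k : ℝ) / 2) := by
    intro k hk
    rcases Nat.eq_zero_or_pos k with h0 | hpos
    · rw [h0, hC0]; simp
    by_cases h2 : 2 * N ≤ k
    · have hk2 : k = 2 * N := le_antisymm hk h2
      rw [hk2, hCtop, hμuniv]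
      congr 1
      push_cast
      ring
    · rw [hCint k hpos (by omega), hs k hpos (by omega)]
  have hdiff : ∀ k, k + 1 ≤ 2 * N → μ (C (k + 1) \ C k) = ENNReal.ofReal (1 / 2) := by
    intro k hk
    rw [measure_diff (hCmono (Nat.le_succ k)) (hCmeas k).nullMeasurableSet (measure_ne_top μ _),
      hCmass (k + 1) hk, hCmass k (by omega), ← ENNReal.ofReal_sub _ (by positivity)]
    congr 1
    push_cast
    ring
  -- the slabs
  set D : Fin N → Set (Pt d) := fun j => C (2 * (j : ℕ) + 1) \ C (2 * (j : ℕ)) with hDdef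
  set E : Fin N → Set (Pt d) := fun j => C (2 * (j : ℕ) + 2) \ C (2 * (j : ℕ) + 1) with hEdef
  have hDm : ∀ j, MeasurableSet (D j) := fun j => (hCmeas _).diff (hCmeas _)
  have hEm : ∀ j, MeasurableSet (E j) := fun j => (hCmeas _).diff (hCmeas _)
  have hDmass : ∀ j : Fin N, μ (D j) = ENNReal.ofReal (1 / 2) := fun j =>
    hdiff (2 * (j : ℕ)) (by have := j.isLt; omega)
  have hEmass : ∀ j : Fin N, μ (E j) = ENNReal.ofReal (1 / 2) := by
    intro j
    have h := hdiff (2 * (j : ℕ) + 1) (by have := j.isLt; omega)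
    rw [show 2 * (j : ℕ) + 1 + 1 = 2 * (j : ℕ) + 2 by omega] at h
    exact h
  -- one-particle measures
  set mD : Fin N → Measure (Pt d) := fun j => μ.restrict (D j) + μ.restrict (D j) with hmDdef
  set mE : Fin N → Measure (Pt d) := fun j => μ.restrict (E j) + μ.restrict (E j) with hmEdef
  haveI hsD : ∀ j, SigmaFinite (mD j) := fun j => by rw [hmDdef]; infer_instance
  haveI hsE : ∀ j, SigmaFinite (mE j) := fun j => by rw [hmEdef]; infer_instance
  have hhalf : ENNReal.ofReal (1 / 2) + ENNReal.ofReal (1 / 2) = 1 := by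
    rw [← ENNReal.ofReal_add (by norm_num) (by norm_num)]
    norm_num
  have hmDuniv : ∀ j, mD j Set.univ = 1 := by
    intro j
    rw [hmDdef]
    simp only [Measure.add_apply, Measure.restrict_apply_univ]
    rw [hDmass j, hhalf]
  have hmEuniv : ∀ j, mE j Set.univ = 1 := by
    intro j
    rw [hmEdef]
    simp only [Measure.add_apply, Measure.restrict_apply_univ]
    rw [hEmass j, hhalf]
  -- the N-particle measures
  set PA : Measure (Fin N → Pt d) := Measure.pi mD with hPAdef
  set PB : Measure (Fin N → Pt d) := Measure.pi mE with hPBdef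
  set P₀ : Measure (Fin N → Pt d) := (2 : ℝ≥0∞)⁻¹ • PA + (2 : ℝ≥0∞)⁻¹ • PB with hP₀def
  have hcomp_meas : ∀ σ : Equiv.Perm (Fin N), Measurable (fun x : Fin N → Pt d => x ∘ σ) :=
    fun σ => measurable_pi_lambda _ (fun i => measurable_pi_apply (σ i))
  set P : Measure (Fin N → Pt d) :=
    (N.factorial : ℝ≥0∞)⁻¹ • ∑ σ : Equiv.Perm (Fin N), Measure.map (fun x => x ∘ σ) P₀
    with hPdef
  have hPapp : ∀ S : Set (Fin N → Pt d), MeasurableSet S →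
      P S = (N.factorial : ℝ≥0∞)⁻¹ *
        ∑ σ : Equiv.Perm (Fin N), P₀ ((fun x => x ∘ σ) ⁻¹' S) := by
    intro S hS
    rw [hPdef, Measure.smul_apply, smul_eq_mul, Measure.finset_sum_apply]
    congr 1
    exact Finset.sum_congr rfl fun σ _ => Measure.map_apply (hcomp_meas σ) hS
  have hPAuniv : PA Set.univ = 1 := by
    rw [hPAdef, Measure.pi_univ]
    exact Finset.prod_eq_one fun j _ => hmDuniv j
  have hPBuniv : PB Set.univ = 1 := by
    rw [hPBdef, Measure.pi_univ]
    exact Finset.prod_eq_one fun j _ => hmEuniv j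
  have hP₀univ : P₀ Set.univ = 1 := by
    rw [hP₀def]
    simp only [Measure.add_apply, Measure.smul_apply, smul_eq_mul]
    rw [hPAuniv, hPBuniv]
    simp only [mul_one]
    exact ENNReal.inv_two_add_inv_two
  have hfactne : (N.factorial : ℝ≥0∞) ≠ 0 := Nat.cast_ne_zero.mpr (Nat.factorial_ne_zero N)
  have hfactnt : (N.factorial : ℝ≥0∞) ≠ ⊤ := ENNReal.natCast_ne_top _
  have hPprob : IsProbabilityMeasure P := by
    constructor
    rw [hPapp Set.univ MeasurableSet.univ]
    simp only [Set.preimage_univ, hP₀univ]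
    rw [Finset.sum_const, Finset.card_univ, Fintype.card_perm, Fintype.card_fin]
    simp only [nsmul_eq_mul, mul_one]
    exact ENNReal.inv_mul_cancel hfactne hfactnt
  -- symmetry
  have hsymm : SymmetricState P := by
    intro σ
    refine Measure.ext fun S hS => ?_
    rw [Measure.map_apply (hcomp_meas σ) hS, hPapp _ (hcomp_meas σ hS), hPapp S hS]
    congr 1
    have hpre : ∀ τ : Equiv.Perm (Fin N),
        ((fun x : Fin N → Pt d => x ∘ τ) ⁻¹' ((fun x : Fin N → Pt d => x ∘ σ) ⁻¹' S))
          = (fun x : Fin N → Pt d => x ∘ (τ * σ)) ⁻¹' S := by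
      intro τ
      rw [← Set.preimage_comp]
      rfl
    calc ∑ τ : Equiv.Perm (Fin N),
          P₀ ((fun x : Fin N → Pt d => x ∘ τ) ⁻¹' ((fun x : Fin N → Pt d => x ∘ σ) ⁻¹' S))
        = ∑ τ : Equiv.Perm (Fin N), P₀ ((fun x : Fin N → Pt d => x ∘ (τ * σ)) ⁻¹' S) :=
          Finset.sum_congr rfl fun τ _ => by rw [hpre]
      _ = ∑ τ : Equiv.Perm (Fin N), P₀ ((fun x : Fin N → Pt d => x ∘ τ) ⁻¹' S) := by
          have := Equiv.sum_comp (Equiv.mulRight σ)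
            (fun τ : Equiv.Perm (Fin N) => P₀ ((fun x : Fin N → Pt d => x ∘ τ) ⁻¹' S))
          simpa using this
  -- cylinder sets
  have hcylm : ∀ (i : Fin N) (A : Set (Pt d)), MeasurableSet A →
      MeasurableSet {x : Fin N → Pt d | x i ∈ A} := fun i A hA =>
    show MeasurableSet ((fun x : Fin N → Pt d => x i) ⁻¹' A) from measurable_pi_apply i hA
  have h2inv : ∀ a : ℝ≥0∞, (2 : ℝ≥0∞)⁻¹ * (a + a) = a := fun a => by
    rw [← two_mul, ← mul_assoc, ENNReal.inv_mul_cancel two_ne_zero ENNReal.ofNat_ne_top, one_mul]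
  have hmD_apply : ∀ (j : Fin N) (A : Set (Pt d)), MeasurableSet A →
      mD j A = μ (A ∩ D j) + μ (A ∩ D j) := by
    intro j A hA
    rw [hmDdef]
    simp only [Measure.add_apply]
    rw [Measure.restrict_apply hA]
  have hmE_apply : ∀ (j : Fin N) (A : Set (Pt d)), MeasurableSet A →
      mE j A = μ (A ∩ E j) + μ (A ∩ E j) := by
    intro j A hA
    rw [hmEdef]
    simp only [Measure.add_apply]
    rw [Measure.restrict_apply hA]
  have hP₀cyl : ∀ (j : Fin N) (A : Set (Pt d)), MeasurableSet A →
      P₀ {x | x j ∈ A} = μ (A ∩ D j) + μ (A ∩ E j) := by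
    intro j A hA
    rw [hP₀def]
    simp only [Measure.add_apply, Measure.smul_apply, smul_eq_mul]
    rw [hPAdef, hPBdef, aux_pi_cyl mD hmDuniv j hA, aux_pi_cyl mE hmEuniv j hA,
      hmD_apply j A hA, hmE_apply j A hA, h2inv, h2inv]
  -- one-body density
  have hdens : HasOneBodyDensity P ρ := by
    intro A hA
    rw [← hμA A hA]
    have hterm : ∀ i : Fin N, P {x | x i ∈ A}
        = (N.factorial : ℝ≥0∞)⁻¹ *
            ∑ σ : Equiv.Perm (Fin N), (μ (A ∩ D (σ i)) + μ (A ∩ E (σ i))) := by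
      intro i
      rw [hPapp _ (hcylm i A hA)]
      congr 1
      refine Finset.sum_congr rfl fun σ _ => ?_
      have hpr : ((fun x : Fin N → Pt d => x ∘ σ) ⁻¹' {x | x i ∈ A})
          = {x : Fin N → Pt d | x (σ i) ∈ A} := rfl
      rw [hpr, hP₀cyl (σ i) A hA]
    have hsumfix : ∑ j : Fin N, (μ (A ∩ D j) + μ (A ∩ E j)) = μ A := by
      have htel := aux_telescope μ C hCmeas hCmono hC0 hA (2 * N)
      rw [hCtop, Set.inter_univ] at htel
      rw [aux_sum_range_two_mul N (fun k => μ (A ∩ (C (k + 1) \ C k)))] at htel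
      rw [htel, ← Fin.sum_univ_eq_sum_range
        (fun k => μ (A ∩ (C (2 * k + 1) \ C (2 * k))) + μ (A ∩ (C (2 * k + 1 + 1) \ C (2 * k + 1)))) N]
    calc ∑ i : Fin N, P {x | x i ∈ A}
        = ∑ i : Fin N, (N.factorial : ℝ≥0∞)⁻¹ *
            ∑ σ : Equiv.Perm (Fin N), (μ (A ∩ D (σ i)) + μ (A ∩ E (σ i))) :=
          Finset.sum_congr rfl fun i _ => hterm i
      _ = (N.factorial : ℝ≥0∞)⁻¹ * ∑ i : Fin N,
            ∑ σ : Equiv.Perm (Fin N), (μ (A ∩ D (σ i)) + μ (A ∩ E (σ i))) := by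
          rw [Finset.mul_sum]
      _ = (N.factorial : ℝ≥0∞)⁻¹ * ∑ σ : Equiv.Perm (Fin N),
            ∑ i : Fin N, (μ (A ∩ D (σ i)) + μ (A ∩ E (σ i))) := by
          rw [Finset.sum_comm]
      _ = (N.factorial : ℝ≥0∞)⁻¹ * ∑ _σ : Equiv.Perm (Fin N), μ A := by
          congr 1
          refine Finset.sum_congr rfl fun σ _ => ?_
          rw [← hsumfix]
          exact Equiv.sum_comp σ (fun j => μ (A ∩ D j) + μ (A ∩ E j))
      _ = μ A := by
          rw [Finset.sum_const, Finset.card_univ, Fintype.card_perm, Fintype.card_fin,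
            nsmul_eq_mul, ← mul_assoc, ENNReal.inv_mul_cancel hfactne hfactnt, one_mul]
  -- the minimal gap
  have hIccne : (Finset.Icc 1 (2 * N - 2)).Nonempty := ⟨1, Finset.mem_Icc.mpr ⟨le_rfl, by omega⟩⟩
  set δ : ℝ := (Finset.Icc 1 (2 * N - 2)).inf' hIccne (fun k => s (k + 1) - s k) with hδdef
  have hδpos : 0 < δ := by
    rw [hδdef, Finset.lt_inf'_iff]
    intro k hk
    rw [Finset.mem_Icc] at hk
    have := hslt k hk.1 (by omega)
    linarith
  have hδle : ∀ k : ℕ, 1 ≤ k → k + 2 ≤ 2 * N → δ ≤ s (k + 1) - s k := fun k h1 h2 =>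
    Finset.inf'_le _ (Finset.mem_Icc.mpr ⟨h1, by omega⟩)
  -- separation between slabs
  have hsep : ∀ a : ℕ, 1 ≤ a → a + 2 ≤ 2 * N → ∀ u v : Pt d,
      u ∈ C a → v ∉ C (a + 1) → δ ≤ dist u v := by
    intro a h1 h2 u v hu hv
    rw [hCint a h1 (by omega)] at hu
    rw [hCint (a + 1) (by omega) (by omega)] at hv
    have hu' : π u ≤ s a := hu
    have hv0 : ¬ π v ≤ s (a + 1) := hv
    have hv' : s (a + 1) < π v := not_le.mp hv0
    have hgap := hδle a h1 h2
    have habs : π v - π u ≤ |u i₀ - v i₀| := by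
      simp only [hπdef]
      calc v i₀ - u i₀ ≤ |v i₀ - u i₀| := le_abs_self _
        _ = |u i₀ - v i₀| := abs_sub_comm _ _
    have hdc := aux_dist_coord i₀ u v
    linarith
  -- the bad set
  set Bad : Set (Fin N → Pt d) := {x | ¬ ∀ j k : Fin N, j ≠ k → δ ≤ dist (x j) (x k)}
    with hBaddef
  have hBadm : MeasurableSet Bad := by
    have hBadeq : Bad = ⋃ (j : Fin N), ⋃ (k : Fin N), ⋃ (_ : j ≠ k),
        {x : Fin N → Pt d | dist (x j) (x k) < δ} := by
      ext x
      simp only [hBaddef, Set.mem_setOf_eq, Set.mem_iUnion, not_forall, not_le, exists_prop]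
    rw [hBadeq]
    refine MeasurableSet.iUnion fun j => MeasurableSet.iUnion fun k =>
      MeasurableSet.iUnion fun _ => ?_
    exact measurableSet_lt
      (Measurable.dist (measurable_pi_apply j) (measurable_pi_apply k)) measurable_const
  have hgoodD : ∀ x : Fin N → Pt d, (∀ j : Fin N, x j ∈ D j) → x ∉ Bad := by
    intro x hx hmem
    apply hmem
    intro j k hjk
    rcases hjk.lt_or_gt with h | h
    · have hjk' : (j : ℕ) < (k : ℕ) := h
      have hkN : (k : ℕ) < N := k.isLt
      have hxj : x j ∈ C (2 * (j : ℕ) + 1) := (hx j).1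
      have hxk : x k ∉ C (2 * (k : ℕ)) := (hx k).2
      have hxk' : x k ∉ C (2 * (j : ℕ) + 1 + 1) := by
        rw [show 2 * (j : ℕ) + 1 + 1 = 2 * (j : ℕ) + 2 by omega]
        exact fun hc => hxk (hCmono (by omega) hc)
      exact hsep (2 * (j : ℕ) + 1) (by omega) (by omega) (x j) (x k) hxj hxk'
    · have hjk' : (k : ℕ) < (j : ℕ) := h
      have hjN : (j : ℕ) < N := j.isLt
      have hxk : x k ∈ C (2 * (k : ℕ) + 1) := (hx k).1
      have hxj : x j ∉ C (2 * (j : ℕ)) := (hx j).2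
      have hxj' : x j ∉ C (2 * (k : ℕ) + 1 + 1) := by
        rw [show 2 * (k : ℕ) + 1 + 1 = 2 * (k : ℕ) + 2 by omega]
        exact fun hc => hxj (hCmono (by omega) hc)
      rw [dist_comm]
      exact hsep (2 * (k : ℕ) + 1) (by omega) (by omega) (x k) (x j) hxk hxj'
  have hgoodE : ∀ x : Fin N → Pt d, (∀ j : Fin N, x j ∈ E j) → x ∉ Bad := by
    intro x hx hmem
    apply hmem
    intro j k hjk
    rcases hjk.lt_or_gt with h | h
    · have hjk' : (j : ℕ) < (k : ℕ) := h
      have hkN : (k : ℕ) < N := k.isLt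
      have hxj : x j ∈ C (2 * (j : ℕ) + 2) := (hx j).1
      have hxk : x k ∉ C (2 * (k : ℕ) + 1) := (hx k).2
      have hxk' : x k ∉ C (2 * (j : ℕ) + 2 + 1) := by
        exact fun hc => hxk (hCmono (by omega) hc)
      exact hsep (2 * (j : ℕ) + 2) (by omega) (by omega) (x j) (x k) hxj hxk'
    · have hjk' : (k : ℕ) < (j : ℕ) := h
      have hjN : (j : ℕ) < N := j.isLt
      have hxk : x k ∈ C (2 * (k : ℕ) + 2) := (hx k).1
      have hxj : x j ∉ C (2 * (j : ℕ) + 1) := (hx j).2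
      have hxj' : x j ∉ C (2 * (k : ℕ) + 2 + 1) := by
        exact fun hc => hxj (hCmono (by omega) hc)
      rw [dist_comm]
      exact hsep (2 * (k : ℕ) + 2) (by omega) (by omega) (x k) (x j) hxk hxj'
  have hPA_good : PA (Set.univ.pi fun j => D j) = 1 := by
    rw [hPAdef, Measure.pi_pi]
    refine Finset.prod_eq_one fun j _ => ?_
    rw [hmDdef]
    simp only [Measure.add_apply]
    rw [Measure.restrict_apply (hDm j), Set.inter_self, hDmass j, hhalf]
  have hPB_good : PB (Set.univ.pi fun j => E j) = 1 := by
    rw [hPBdef, Measure.pi_pi]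
    refine Finset.prod_eq_one fun j _ => ?_
    rw [hmEdef]
    simp only [Measure.add_apply]
    rw [Measure.restrict_apply (hEm j), Set.inter_self, hEmass j, hhalf]
  have hPABad : PA Bad = 0 := by
    have hpim : MeasurableSet (Set.univ.pi fun j => D j) := MeasurableSet.univ_pi hDm
    have hcompl : PA (Set.univ.pi fun j => D j)ᶜ = 0 := by
      rw [measure_compl hpim (by rw [hPA_good]; exact ENNReal.one_ne_top), hPAuniv, hPA_good, tsub_self]
    refine measure_mono_null ?_ hcompl
    intro x hx
    simp only [Set.mem_compl_iff]
    intro hpi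
    exact (hgoodD x fun j => hpi j (Set.mem_univ j)) hx
  have hPBBad : PB Bad = 0 := by
    have hpim : MeasurableSet (Set.univ.pi fun j => E j) := MeasurableSet.univ_pi hEm
    have hcompl : PB (Set.univ.pi fun j => E j)ᶜ = 0 := by
      rw [measure_compl hpim (by rw [hPB_good]; exact ENNReal.one_ne_top), hPBuniv, hPB_good, tsub_self]
    refine measure_mono_null ?_ hcompl
    intro x hx
    simp only [Set.mem_compl_iff]
    intro hpi
    exact (hgoodE x fun j => hpi j (Set.mem_univ j)) hx
  have hP₀Bad : P₀ Bad = 0 := by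
    rw [hP₀def]
    simp only [Measure.add_apply, Measure.smul_apply, smul_eq_mul]
    rw [hPABad, hPBBad]
    simp
  have hPBad : P Bad = 0 := by
    rw [hPapp Bad hBadm]
    have hz : ∀ σ : Equiv.Perm (Fin N), P₀ ((fun x : Fin N → Pt d => x ∘ σ) ⁻¹' Bad) = 0 := by
      intro σ
      refine measure_mono_null ?_ hP₀Bad
      intro x hx
      simp only [Set.mem_preimage, hBaddef, Set.mem_setOf_eq] at hx ⊢
      intro hgood
      exact hx fun j k hjk => hgood (σ j) (σ k) (fun hc => hjk (σ.injective hc))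
    simp only [hz, Finset.sum_const_zero, mul_zero]
  refine ⟨δ, P, hδpos, hPprob, hsymm, hdens, ?_⟩
  rw [MeasureTheory.ae_iff]
  rw [← hBaddef]
  exact hPBad
end
end

section
/- Let r₀ > 0 and let 0 ≤ ρ ∈ L¹(ℝ) with ∫_ℝ ρ = N ∈ ℕ satisfy ∫_{[x, x+r₀)} ρ ≤ 1 for all x ∈ ℝ. Then there exists a symmetric Borel probability measure ℙ on ℝ^N whose one-body density equals ρ and such that, ℙ-almost everywhere, |x_j − x_k| ≥ r₀ for all 1 ≤ j < k ≤ N. In particular, ρ is representable with zero energy for the hard-core potential w_{r₀}(x) = (+∞)·𝟙(|x| < r₀). -/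
open MeasureTheory Filter
open scoped ENNReal BigOperators

noncomputable section

open ClDFT


namespace Stmt10
open MeasureTheory Filter Set

noncomputable def F (ρ : ℝ → ℝ) (x : ℝ) : ℝ := ∫ y in Set.Iic x, ρ y

noncomputable def T (ρ : ℝ → ℝ) (s : ℝ) : ℝ := sInf {x | s ≤ F ρ x}

variable {ρ : ℝ → ℝ}

lemma F_mono (hρ : ∀ x, 0 ≤ ρ x) (hint : Integrable ρ) : Monotone (F ρ) := fun a b hab =>
  setIntegral_mono_set hint.integrableOn (ae_of_all _ hρ)
    (HasSubset.Subset.eventuallyLE (Iic_subset_Iic.2 hab))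

lemma F_nonneg (hρ : ∀ x, 0 ≤ ρ x) (x : ℝ) : 0 ≤ F ρ x :=
  setIntegral_nonneg measurableSet_Iic fun y _ => hρ y

lemma F_le_mass (hρ : ∀ x, 0 ≤ ρ x) (hint : Integrable ρ) (x : ℝ) : F ρ x ≤ ∫ y, ρ y :=
  setIntegral_le_integral hint (ae_of_all _ hρ)

lemma F_eq (hint : Integrable ρ) (x : ℝ) :
    F ρ x = F ρ 0 + ∫ y in (0:ℝ)..x, ρ y := by
  have h := intervalIntegral.integral_Iic_sub_Iic (μ := volume) (f := ρ) (a := (0:ℝ))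
    (b := x) hint.integrableOn hint.integrableOn
  unfold F; linarith

lemma F_cont (hint : Integrable ρ) : Continuous (F ρ) := by
  have : F ρ = fun x => F ρ 0 + ∫ y in (0:ℝ)..x, ρ y := funext fun x => F_eq hint x
  rw [this]
  exact continuous_const.add (hint.continuous_primitive 0)

lemma F_tendsto_atTop (hint : Integrable ρ) :
    Tendsto (F ρ) atTop (nhds (∫ y, ρ y)) := by
  have h := tendsto_setIntegral_of_monotone (μ := volume) (f := ρ)
    (s := fun x : ℝ => Iic x) (fun i => measurableSet_Iic)
    (fun a b hab => Iic_subset_Iic.2 hab) (by rw [iUnion_Iic]; exact hint.integrableOn)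
  rwa [iUnion_Iic, setIntegral_univ] at h

lemma F_tendsto_atBot (hint : Integrable ρ) :
    Tendsto (F ρ) atBot (nhds 0) := by
  have h := tendsto_setIntegral_of_antitone (μ := volume) (f := ρ)
    (s := fun x : ℝ => Iic (-x)) (fun i => measurableSet_Iic)
    (fun a b hab => Iic_subset_Iic.2 (neg_le_neg hab)) ⟨0, hint.integrableOn⟩
  have he : ⋂ x : ℝ, Iic (-x) = (∅ : Set ℝ) := by
    ext y
    simp only [mem_iInter, mem_Iic, mem_empty_iff_false, iff_false, not_forall, not_le]
    exact ⟨-(y - 1), by linarith⟩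
  rw [he, setIntegral_empty] at h
  have h2 := h.comp (tendsto_neg_atBot_atTop (G := ℝ))
  exact h2.congr fun x => by simp [Function.comp, F]


variable {s r₀ : ℝ}

lemma setF_nonempty (hint : Integrable ρ) (hs : s < ∫ y, ρ y) :
    {x | s ≤ F ρ x}.Nonempty :=
  ((F_tendsto_atTop hint).eventually_const_le hs).exists

lemma setF_bddBelow (hint : Integrable ρ) (hs : 0 < s) :
    BddBelow {x | s ≤ F ρ x} := by
  obtain ⟨a, ha⟩ := eventually_atBot.1 ((F_tendsto_atBot hint).eventually_lt_const hs)
  exact ⟨a, fun x hx => le_of_not_gt fun hlt => absurd hx (not_le.2 (ha x hlt.le))⟩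

lemma T_mem (hint : Integrable ρ) (h0 : 0 < s) (hs : s < ∫ y, ρ y) :
    s ≤ F ρ (T ρ s) :=
  (isClosed_le continuous_const (F_cont hint)).csInf_mem
    (setF_nonempty hint hs) (setF_bddBelow hint h0)

lemma F_T_eq (hρ : ∀ x, 0 ≤ ρ x) (hint : Integrable ρ) (h0 : 0 < s)
    (hs : s < ∫ y, ρ y) : F ρ (T ρ s) = s := by
  refine le_antisymm ?_ (T_mem hint h0 hs)
  by_contra hlt
  push_neg at hlt
  have h1 : ∀ᶠ x in nhds (T ρ s), s < F ρ x :=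
    (F_cont hint).continuousAt.eventually_const_lt hlt
  have h2 : ∀ᶠ x in nhdsWithin (T ρ s) (Iio (T ρ s)), s < F ρ x :=
    h1.filter_mono nhdsWithin_le_nhds
  obtain ⟨x, hx1, hx2⟩ := (h2.and self_mem_nhdsWithin).exists
  exact absurd (csInf_le (setF_bddBelow hint h0) hx1.le) (not_le.2 hx2)

lemma T_le_iff (hρ : ∀ x, 0 ≤ ρ x) (hint : Integrable ρ) (h0 : 0 < s)
    (hs : s < ∫ y, ρ y) {x : ℝ} : T ρ s ≤ x ↔ s ≤ F ρ x := by
  constructor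
  · intro h
    calc s = F ρ (T ρ s) := (F_T_eq hρ hint h0 hs).symm
    _ ≤ F ρ x := F_mono hρ hint h
  · intro h
    exact csInf_le (setF_bddBelow hint h0) h

lemma T_mono (hint : Integrable ρ) {s' : ℝ} (h0 : 0 < s) (hss' : s ≤ s')
    (hs' : s' < ∫ y, ρ y) : T ρ s ≤ T ρ s' :=
  csInf_le_csInf (setF_bddBelow hint h0) (setF_nonempty hint hs')
    (fun _ hx => le_trans hss' hx)

lemma F_window (hint : Integrable ρ)
    (hwin : ∀ x : ℝ, ∫ y in Set.Ico x (x + r₀), ρ y ≤ 1) (hr : 0 ≤ r₀) (x : ℝ) :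
    F ρ (x + r₀) ≤ F ρ x + 1 := by
  have h := intervalIntegral.integral_Iic_sub_Iic (μ := volume) (f := ρ) (a := x)
    (b := x + r₀) hint.integrableOn hint.integrableOn
  have h2 : ∫ y in x..(x + r₀), ρ y = ∫ y in Ico x (x + r₀), ρ y := by
    rw [intervalIntegral.integral_of_le (by linarith)]
    exact setIntegral_congr_set (Ioc_ae_eq_Icc.trans Ico_ae_eq_Icc.symm)
  have h3 := hwin x
  unfold F at h ⊢
  rw [h2] at h
  linarith

lemma singleton_sub (q : ℚ) (j : ℕ) : {t : ℝ | F ρ q = t + j + 1} ⊆ {F ρ q - j - 1} := by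
  intro t ht
  simp only [Set.mem_setOf_eq] at ht
  simp only [Set.mem_singleton_iff]
  linarith

lemma bad_countable (hρ : ∀ x, 0 ≤ ρ x) (hint : Integrable ρ)
    (hwin : ∀ x : ℝ, ∫ y in Set.Ico x (x + r₀), ρ y ≤ 1) (hr : 0 ≤ r₀)
    (N : ℕ) (hmass : ∫ y, ρ y = N) (j : ℕ) :
    Set.Countable {t : ℝ | t ∈ Ioo (0:ℝ) 1 ∧ j + 2 ≤ N ∧
      T ρ (t + j + 1) < T ρ (t + j) + r₀} := by
  refine Set.Countable.mono ?_ (Set.countable_iUnion (fun q : ℚ =>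
    ((Set.subsingleton_of_subset_singleton (singleton_sub (ρ := ρ) q j)).countable)))
  intro t ⟨⟨ht0, ht1⟩, hjN, hbad⟩
  have hN : (j:ℝ) + 2 ≤ (N:ℝ) := by exact_mod_cast hjN
  have hj0 : (0:ℝ) ≤ (j:ℝ) := Nat.cast_nonneg j
  have h01 : 0 < t + (j:ℝ) := by linarith
  have hs1N : t + (j:ℝ) < ∫ y, ρ y := by rw [hmass]; linarith
  have h02 : 0 < t + (j:ℝ) + 1 := by linarith
  have hs2N : t + (j:ℝ) + 1 < ∫ y, ρ y := by rw [hmass]; linarith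
  obtain ⟨q, hq1, hq2⟩ := exists_rat_btwn hbad
  refine Set.mem_iUnion.2 ⟨q, ?_⟩
  show F ρ q = t + (j:ℝ) + 1
  have hupper : F ρ q ≤ t + (j:ℝ) + 1 := by
    have := F_mono hρ hint hq2.le
    have h2 := F_window hint hwin hr (T ρ (t + (j:ℝ)))
    rw [F_T_eq hρ hint h01 hs1N] at h2
    linarith
  have hlower : t + (j:ℝ) + 1 ≤ F ρ q := by
    have := F_mono hρ hint hq1.le
    rwa [F_T_eq hρ hint h02 hs2N] at this
  linarith

lemma sep_good (hρ : ∀ x, 0 ≤ ρ x) (hint : Integrable ρ) {N : ℕ}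
    (hmass : ∫ y, ρ y = N) {t : ℝ} (ht : t ∈ Ioo (0:ℝ) 1)
    (hgood : ∀ j : ℕ, j + 2 ≤ N → T ρ (t + j) + r₀ ≤ T ρ (t + j + 1)) :
    ∀ j k : Fin N, (j:ℕ) < (k:ℕ) → T ρ (t + j) + r₀ ≤ T ρ (t + k) := by
  intro j k hjk
  obtain ⟨ht0, ht1⟩ := ht
  have hkN : (k:ℕ) < N := k.isLt
  have hj2 : (j:ℕ) + 2 ≤ N := by omega
  have h1 := hgood j hj2
  have hcast : ((j:ℕ):ℝ) + 1 ≤ ((k:ℕ):ℝ) := by exact_mod_cast Nat.succ_le_of_lt hjk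
  have hkr : ((k:ℕ):ℝ) + 1 ≤ (N:ℝ) := by exact_mod_cast Nat.succ_le_of_lt hkN
  have h2 : T ρ (t + (j:ℕ) + 1) ≤ T ρ (t + (k:ℕ)) := by
    refine T_mono hint (by positivity) (by linarith) ?_
    rw [hmass]; linarith
  linarith

lemma nullMeasurable_inter {S t : Set ℝ} (ht : MeasurableSet t)
    (h : NullMeasurableSet S (volume.restrict t)) :
    NullMeasurableSet (S ∩ t) volume := by
  obtain ⟨B, hBm, hSB⟩ := h
  rw [MeasureTheory.ae_eq_set] at hSB
  rw [Measure.restrict_apply' ht, Measure.restrict_apply' ht] at hSB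
  refine ⟨B ∩ t, hBm.inter ht, ?_⟩
  rw [MeasureTheory.ae_eq_set]
  constructor
  · refine measure_mono_null (fun x hx => ?_) hSB.1
    simp only [Set.mem_diff, Set.mem_inter_iff] at hx ⊢
    tauto
  · refine measure_mono_null (fun x hx => ?_) hSB.2
    simp only [Set.mem_diff, Set.mem_inter_iff] at hx ⊢
    tauto

lemma map_finset_sum {δ γ : Type*} [MeasurableSpace δ] [MeasurableSpace γ] {f : δ → γ}
    (hf : Measurable f) {ι : Type*} (s : Finset ι) (μ : ι → Measure δ) :
    Measure.map f (∑ i ∈ s, μ i) = ∑ i ∈ s, Measure.map f (μ i) := by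
  classical
  induction s using Finset.induction_on with
  | empty => simp
  | insert _ _ hns ih =>
      rw [Finset.sum_insert hns, Finset.sum_insert hns, Measure.map_add _ _ hf, ih]

end Stmt10

/-- **1D hard-core representability.** -/
theorem statement10 (r₀ : ℝ) (hr₀ : 0 < r₀) (N : ℕ) (ρ : ℝ → ℝ)
    (hρ : ∀ x, 0 ≤ ρ x) (hint : Integrable ρ) (hmass : ∫ x, ρ x = N)
    (hwin : ∀ x : ℝ, ∫ y in Set.Ico x (x + r₀), ρ y ≤ 1) :
    ∃ P : Measure (Fin N → ℝ), IsProbabilityMeasure P ∧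
      SymmetricState P ∧ HasOneBodyDensity P ρ ∧
      (∀ᵐ x ∂P, ∀ j k : Fin N, j ≠ k → r₀ ≤ |x j - x k|) ∧
      interactionEnergy (fun x : ℝ => if |x| < r₀ then (⊤ : EReal) else 0) N P = 0 := by
  classical
  have hmass' : ∫ y, ρ y = (N : ℝ) := hmass
  set Tf : ℝ → ℝ := Stmt10.T ρ with hTf
  set Φ : ℝ → (Fin N → ℝ) := fun t i => Tf (t + ((i : ℕ) : ℝ)) with hΦdef
  -- a.e.-measurability of Φ on (0,1)
  have hmonoOn : ∀ i : Fin N, MonotoneOn (fun t => Tf (t + ((i : ℕ) : ℝ))) (Set.Ioo (0:ℝ) 1) := by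
    intro i t ht u hu htu
    have hi0 : (0:ℝ) ≤ ((i : ℕ) : ℝ) := Nat.cast_nonneg _
    have hiN : ((i : ℕ) : ℝ) + 1 ≤ (N : ℝ) := by exact_mod_cast i.isLt
    refine Stmt10.T_mono hint (by linarith [ht.1]) (by linarith) ?_
    rw [hmass']; linarith [hu.2]
  have hcoord : ∀ i : Fin N, AEMeasurable (fun t => Tf (t + ((i : ℕ) : ℝ)))
      (volume.restrict (Set.Ioo (0:ℝ) 1)) := fun i =>
    aemeasurable_restrict_of_monotoneOn measurableSet_Ioo (hmonoOn i)
  have hΦae : AEMeasurable Φ (volume.restrict (Set.Ioo (0:ℝ) 1)) := by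
    choose g hgm hge using hcoord
    refine ⟨fun t i => g i t, measurable_pi_lambda _ hgm, ?_⟩
    have hall : ∀ᵐ t ∂(volume.restrict (Set.Ioo (0:ℝ) 1)),
        ∀ i : Fin N, Tf (t + ((i : ℕ) : ℝ)) = g i t := ae_all_iff.2 hge
    filter_upwards [hall] with t ht
    funext i
    exact ht i
  set P₀ : Measure (Fin N → ℝ) := Measure.map Φ (volume.restrict (Set.Ioo (0:ℝ) 1)) with hP₀
  set gp : Equiv.Perm (Fin N) → (Fin N → ℝ) → (Fin N → ℝ) := fun σ x => x ∘ σ with hgp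
  have hgpm : ∀ σ, Measurable (gp σ) := fun σ =>
    measurable_pi_lambda _ fun i => measurable_pi_apply (σ i)
  set P : Measure (Fin N → ℝ) :=
    ((N.factorial : ℝ≥0∞))⁻¹ • ∑ σ : Equiv.Perm (Fin N), Measure.map (gp σ) P₀ with hP
  have hfac0 : (N.factorial : ℝ≥0∞) ≠ 0 := by
    simp [Nat.factorial_ne_zero]
  have hfactop : (N.factorial : ℝ≥0∞) ≠ ⊤ := ENNReal.natCast_ne_top _
  have hPapply : ∀ A : Set (Fin N → ℝ), MeasurableSet A →
      P A = (N.factorial : ℝ≥0∞)⁻¹ * ∑ σ : Equiv.Perm (Fin N), P₀ (gp σ ⁻¹' A) := by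
    intro A hA
    rw [hP, Measure.smul_apply, Measure.finset_sum_apply, smul_eq_mul]
    congr 1
    exact Finset.sum_congr rfl fun σ _ => Measure.map_apply (hgpm σ) hA
  have hP₀univ : P₀ Set.univ = 1 := by
    rw [hP₀, Measure.map_apply_of_aemeasurable hΦae MeasurableSet.univ]
    simp [Real.volume_Ioo]
  have hcard : (Finset.univ : Finset (Equiv.Perm (Fin N))).card = N.factorial := by
    rw [Finset.card_univ, Fintype.card_perm, Fintype.card_fin]
  haveI hPprob : IsProbabilityMeasure P := by
    constructor
    rw [hPapply _ MeasurableSet.univ]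
    simp only [Set.preimage_univ, hP₀univ]
    rw [Finset.sum_const, hcard, nsmul_eq_mul, mul_one]
    exact ENNReal.inv_mul_cancel hfac0 hfactop
  have hsymm : SymmetricState P := by
    intro τ
    have hgpcomp : ∀ σ : Equiv.Perm (Fin N), gp τ ∘ gp σ = gp (σ * τ) := by
      intro σ
      funext x
      simp only [hgp, Function.comp]
      funext i
      simp [Equiv.Perm.mul_apply]
    rw [hP, Measure.map_smul, Stmt10.map_finset_sum (hgpm τ)]
    congr 1
    have h1 : ∀ σ : Equiv.Perm (Fin N),
        Measure.map (gp τ) (Measure.map (gp σ) P₀) = Measure.map (gp (σ * τ)) P₀ := by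
      intro σ
      rw [Measure.map_map (hgpm τ) (hgpm σ), hgpcomp σ]
    calc (∑ σ : Equiv.Perm (Fin N), Measure.map (gp τ) (Measure.map (gp σ) P₀))
        = ∑ σ : Equiv.Perm (Fin N), Measure.map (gp (σ * τ)) P₀ :=
          Finset.sum_congr rfl fun σ _ => h1 σ
      _ = ∑ σ : Equiv.Perm (Fin N), Measure.map (gp σ) P₀ :=
          Fintype.sum_equiv (Equiv.mulRight τ) _ _ (fun σ => rfl)
  -- the bad set
  set Bad : Set ℝ := ⋃ j : ℕ, {t : ℝ | t ∈ Set.Ioo (0:ℝ) 1 ∧ j + 2 ≤ N ∧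
      Tf (t + j + 1) < Tf (t + j) + r₀} with hBad
  have hBadnull : volume Bad = 0 :=
    (Set.countable_iUnion fun j =>
      Stmt10.bad_countable hρ hint hwin hr₀.le N hmass' j).measure_zero _
  -- the separation set
  set Sset : Set (Fin N → ℝ) := {x | ∀ j k : Fin N, j ≠ k → r₀ ≤ |x j - x k|} with hSset
  have hSmeas : MeasurableSet Sset := by
    have hrw : Sset = ⋂ (j : Fin N) (k : Fin N), {x : Fin N → ℝ | j ≠ k → r₀ ≤ |x j - x k|} := by
      ext x
      simp [hSset, Set.mem_iInter]
    rw [hrw]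
    refine MeasurableSet.iInter fun j => MeasurableSet.iInter fun k => ?_
    by_cases hjk : j = k
    · simp [hjk]
    · have : {x : Fin N → ℝ | j ≠ k → r₀ ≤ |x j - x k|} = {x | r₀ ≤ |x j - x k|} := by
        ext x; simp [hjk]
      rw [this]
      exact measurableSet_le measurable_const
        (((measurable_pi_apply j).sub (measurable_pi_apply k)).abs)
  have hgpS : ∀ σ : Equiv.Perm (Fin N), gp σ ⁻¹' Sset = Sset := by
    intro σ
    ext x
    simp only [Set.mem_preimage, hSset, Set.mem_setOf_eq, hgp, Function.comp]
    constructor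
    · intro h j k hjk
      have h2 := h (σ⁻¹ j) (σ⁻¹ k) (fun hc => hjk (by
        have := congrArg σ hc
        simpa using this))
      simpa using h2
    · intro h j k hjk
      exact h (σ j) (σ k) fun hc => hjk (σ.injective hc)
  have hΦS : Φ ⁻¹' Ssetᶜ ∩ Set.Ioo (0:ℝ) 1 ⊆ Bad := by
    intro t ⟨htS, ht01⟩
    by_contra htB
    apply htS
    have hgood : ∀ j : ℕ, j + 2 ≤ N → Tf (t + j) + r₀ ≤ Tf (t + j + 1) := by
      intro j hj
      by_contra hlt
      push_neg at hlt
      exact htB (Set.mem_iUnion.2 ⟨j, ht01, hj, hlt⟩)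
    have hsep := Stmt10.sep_good hρ hint hmass' ht01 hgood
    intro j k hjk
    have hvne : (j : ℕ) ≠ (k : ℕ) := fun h => hjk (Fin.ext h)
    rcases hvne.lt_or_gt with hlt | hlt
    · have := hsep j k hlt
      rw [abs_sub_comm]
      calc r₀ ≤ Tf (t + ((k:ℕ):ℝ)) - Tf (t + ((j:ℕ):ℝ)) := by linarith
        _ ≤ |Φ t k - Φ t j| := le_abs_self _
    · have := hsep k j hlt
      calc r₀ ≤ Tf (t + ((j:ℕ):ℝ)) - Tf (t + ((k:ℕ):ℝ)) := by linarith
        _ ≤ |Φ t j - Φ t k| := le_abs_self _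
  have hP₀S : P₀ Ssetᶜ = 0 := by
    rw [hP₀, Measure.map_apply_of_aemeasurable hΦae hSmeas.compl,
      Measure.restrict_apply' measurableSet_Ioo]
    exact measure_mono_null hΦS hBadnull
  have hPS : P Ssetᶜ = 0 := by
    rw [hPapply _ hSmeas.compl]
    have hz : ∀ σ : Equiv.Perm (Fin N), P₀ (gp σ ⁻¹' Ssetᶜ) = 0 := by
      intro σ
      rw [Set.preimage_compl, hgpS σ]
      exact hP₀S
    rw [Finset.sum_congr rfl fun σ _ => hz σ]
    simp
  have hae : ∀ᵐ x ∂P, ∀ j k : Fin N, j ≠ k → r₀ ≤ |x j - x k| := by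
    rw [MeasureTheory.ae_iff]
    have hset : {a : Fin N → ℝ | ¬ ∀ j k : Fin N, j ≠ k → r₀ ≤ |a j - a k|} = Ssetᶜ := by
      ext x
      simp [hSset]
    rw [hset]
    exact hPS
  -- one-body density
  have hobd : HasOneBodyDensity P ρ := by
    intro A hA
    have hmeasSi : ∀ i : Fin N, MeasurableSet {x : Fin N → ℝ | x i ∈ A} :=
      fun i => measurable_pi_apply i hA
    have hstep1 : ∑ i : Fin N, P {x | x i ∈ A} = ∑ i : Fin N, P₀ {x | x i ∈ A} := by
      have hPi : ∀ i : Fin N, P {x | x i ∈ A}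
          = (N.factorial : ℝ≥0∞)⁻¹ * ∑ σ : Equiv.Perm (Fin N), P₀ (gp σ ⁻¹' {x | x i ∈ A}) :=
        fun i => hPapply _ (hmeasSi i)
      have hinner : ∀ σ : Equiv.Perm (Fin N),
          (∑ i : Fin N, P₀ (gp σ ⁻¹' {x | x i ∈ A})) = ∑ i : Fin N, P₀ {x | x i ∈ A} :=
        fun σ => Equiv.sum_comp σ (fun j => P₀ {x | x j ∈ A})
      rw [Finset.sum_congr rfl fun i _ => hPi i, ← Finset.mul_sum, Finset.sum_comm,
        Finset.sum_congr rfl fun σ _ => hinner σ, Finset.sum_const, hcard, nsmul_eq_mul,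
        ← mul_assoc, ENNReal.inv_mul_cancel hfac0 hfactop, one_mul]
    have hP₀i : ∀ i : Fin N, P₀ {x | x i ∈ A}
        = volume (Tf ⁻¹' A ∩ Set.Ioo (((i:ℕ):ℝ)) (((i:ℕ):ℝ) + 1)) := by
      intro i
      rw [hP₀, Measure.map_apply_of_aemeasurable hΦae (hmeasSi i),
        Measure.restrict_apply' measurableSet_Ioo]
      have hseteq : Φ ⁻¹' {x | x i ∈ A} ∩ Set.Ioo (0:ℝ) 1
          = (fun t => t + ((i:ℕ):ℝ)) ⁻¹' (Tf ⁻¹' A ∩ Set.Ioo (((i:ℕ):ℝ)) (((i:ℕ):ℝ) + 1)) := by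
        ext t
        simp only [Set.mem_inter_iff, Set.mem_preimage, Set.mem_setOf_eq, Set.mem_Ioo, hΦdef]
        constructor
        · rintro ⟨hTA, h0, h1⟩
          exact ⟨hTA, by linarith, by linarith⟩
        · rintro ⟨hTA, h0, h1⟩
          exact ⟨hTA, by linarith, by linarith⟩
      rw [hseteq, measure_preimage_add_right]
    have hmonoN : MonotoneOn Tf (Set.Ioo (0:ℝ) (N:ℝ)) := by
      intro a ha b hb hab
      exact Stmt10.T_mono hint ha.1 hab (by rw [hmass']; exact hb.2)
    have hTaeN : AEMeasurable Tf (volume.restrict (Set.Ioo (0:ℝ) (N:ℝ))) :=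
      aemeasurable_restrict_of_monotoneOn measurableSet_Ioo hmonoN
    have hTaei : ∀ i : Fin N,
        AEMeasurable Tf (volume.restrict (Set.Ioo (((i:ℕ):ℝ)) (((i:ℕ):ℝ) + 1))) := by
      intro i
      refine aemeasurable_restrict_of_monotoneOn measurableSet_Ioo ?_
      intro a ha b hb hab
      have hi0 : (0:ℝ) ≤ ((i:ℕ):ℝ) := Nat.cast_nonneg _
      have hiN : ((i:ℕ):ℝ) + 1 ≤ (N:ℝ) := by exact_mod_cast i.isLt
      refine Stmt10.T_mono hint (lt_of_le_of_lt hi0 ha.1) hab ?_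
      rw [hmass']
      linarith [hb.2]
    have hnm : ∀ i : Fin N, NullMeasurableSet
        (Tf ⁻¹' A ∩ Set.Ioo (((i:ℕ):ℝ)) (((i:ℕ):ℝ) + 1)) volume := fun i =>
      Stmt10.nullMeasurable_inter measurableSet_Ioo ((hTaei i).nullMeasurable hA)
    have hdisj : ((Finset.univ : Finset (Fin N)) : Set (Fin N)).Pairwise
        (Function.onFun (MeasureTheory.AEDisjoint volume)
          (fun i : Fin N => Tf ⁻¹' A ∩ Set.Ioo (((i:ℕ):ℝ)) (((i:ℕ):ℝ) + 1))) := by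
      intro i _ j _ hij
      refine Disjoint.aedisjoint (Set.disjoint_left.2 fun t ht1 ht2 => ?_)
      have hvne : (i:ℕ) ≠ (j:ℕ) := fun h => hij (Fin.ext h)
      rcases hvne.lt_or_gt with h | h
      · have hc : ((i:ℕ):ℝ) + 1 ≤ ((j:ℕ):ℝ) := by exact_mod_cast h
        have h1 := ht1.2.2
        have h2 := ht2.2.1
        linarith
      · have hc : ((j:ℕ):ℝ) + 1 ≤ ((i:ℕ):ℝ) := by exact_mod_cast h
        have h1 := ht2.2.2
        have h2 := ht1.2.1
        linarith
    have hsum : (∑ i : Fin N, volume (Tf ⁻¹' A ∩ Set.Ioo (((i:ℕ):ℝ)) (((i:ℕ):ℝ) + 1)))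
        = volume (Tf ⁻¹' A ∩ Set.Ioo (0:ℝ) (N:ℝ)) := by
      rw [← measure_biUnion_finset₀ hdisj (fun i _ => hnm i)]
      have hcup : (⋃ i ∈ (Finset.univ : Finset (Fin N)),
            (Tf ⁻¹' A ∩ Set.Ioo (((i:ℕ):ℝ)) (((i:ℕ):ℝ) + 1)))
          = Tf ⁻¹' A ∩ ⋃ i : Fin N, Set.Ioo (((i:ℕ):ℝ)) (((i:ℕ):ℝ) + 1) := by
        simp [Set.inter_iUnion]
      rw [hcup]
      have hsub : (⋃ i : Fin N, Set.Ioo (((i:ℕ):ℝ)) (((i:ℕ):ℝ) + 1))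
          ⊆ Set.Ioo (0:ℝ) (N:ℝ) := by
        rintro s hs
        obtain ⟨i, hi⟩ := Set.mem_iUnion.1 hs
        have hi0 : (0:ℝ) ≤ ((i:ℕ):ℝ) := Nat.cast_nonneg _
        have hiN : ((i:ℕ):ℝ) + 1 ≤ (N:ℝ) := by exact_mod_cast i.isLt
        exact ⟨lt_of_le_of_lt hi0 hi.1, lt_of_lt_of_le hi.2 hiN⟩
      have hnull : volume (Set.Ioo (0:ℝ) (N:ℝ)
          \ ⋃ i : Fin N, Set.Ioo (((i:ℕ):ℝ)) (((i:ℕ):ℝ) + 1)) = 0 := by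
        refine measure_mono_null ?_ ((Set.countable_range ((↑) : ℕ → ℝ)).measure_zero volume)
        rintro s ⟨⟨hs0, hsN⟩, hsu⟩
        by_contra hsr
        apply hsu
        have hfl : (⌊s⌋₊ : ℝ) ≤ s := Nat.floor_le hs0.le
        have hfl2 : s < (⌊s⌋₊ : ℝ) + 1 := Nat.lt_floor_add_one s
        have hne : (⌊s⌋₊ : ℝ) ≠ s := fun h => hsr ⟨⌊s⌋₊, h⟩
        have hflN : ⌊s⌋₊ < N := by
          have hk : (⌊s⌋₊ : ℝ) < (N:ℝ) := lt_of_le_of_lt hfl hsN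
          exact_mod_cast hk
        exact Set.mem_iUnion.2 ⟨⟨⌊s⌋₊, hflN⟩, lt_of_le_of_ne hfl hne, hfl2⟩
      refine le_antisymm (measure_mono (Set.inter_subset_inter_right _ hsub)) ?_
      have hsplit : Tf ⁻¹' A ∩ Set.Ioo (0:ℝ) (N:ℝ)
          ⊆ (Tf ⁻¹' A ∩ ⋃ i : Fin N, Set.Ioo (((i:ℕ):ℝ)) (((i:ℕ):ℝ) + 1))
            ∪ (Set.Ioo (0:ℝ) (N:ℝ) \ ⋃ i : Fin N, Set.Ioo (((i:ℕ):ℝ)) (((i:ℕ):ℝ) + 1)) := by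
        rintro s ⟨hsA, hsI⟩
        by_cases hsu : s ∈ ⋃ i : Fin N, Set.Ioo (((i:ℕ):ℝ)) (((i:ℕ):ℝ) + 1)
        · exact Or.inl ⟨hsA, hsu⟩
        · exact Or.inr ⟨hsI, hsu⟩
      calc volume (Tf ⁻¹' A ∩ Set.Ioo (0:ℝ) (N:ℝ))
          ≤ volume ((Tf ⁻¹' A ∩ ⋃ i : Fin N, Set.Ioo (((i:ℕ):ℝ)) (((i:ℕ):ℝ) + 1))
              ∪ (Set.Ioo (0:ℝ) (N:ℝ) \ ⋃ i : Fin N, Set.Ioo (((i:ℕ):ℝ)) (((i:ℕ):ℝ) + 1))) :=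
            measure_mono hsplit
        _ ≤ volume (Tf ⁻¹' A ∩ ⋃ i : Fin N, Set.Ioo (((i:ℕ):ℝ)) (((i:ℕ):ℝ) + 1))
              + volume (Set.Ioo (0:ℝ) (N:ℝ)
                \ ⋃ i : Fin N, Set.Ioo (((i:ℕ):ℝ)) (((i:ℕ):ℝ) + 1)) := measure_union_le _ _
        _ = volume (Tf ⁻¹' A ∩ ⋃ i : Fin N, Set.Ioo (((i:ℕ):ℝ)) (((i:ℕ):ℝ) + 1)) := by
            rw [hnull, add_zero]
    have hFN : ∀ x : ℝ, Stmt10.F ρ x ≤ (N:ℝ) := fun x => by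
      rw [← hmass']
      exact Stmt10.F_le_mass hρ hint x
    have hiic : ∀ x : ℝ, volume (Tf ⁻¹' Set.Iic x ∩ Set.Ioo (0:ℝ) (N:ℝ))
        = ENNReal.ofReal (Stmt10.F ρ x) := by
      intro x
      have hset : Tf ⁻¹' Set.Iic x ∩ Set.Ioo (0:ℝ) (N:ℝ)
          = Set.Iic (Stmt10.F ρ x) ∩ Set.Ioo (0:ℝ) (N:ℝ) := by
        ext s
        simp only [Set.mem_inter_iff, Set.mem_preimage, Set.mem_Iic, Set.mem_Ioo]
        constructor
        · rintro ⟨h1, h2, h3⟩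
          exact ⟨(Stmt10.T_le_iff hρ hint h2 (by rw [hmass']; exact h3)).1 h1, h2, h3⟩
        · rintro ⟨h1, h2, h3⟩
          exact ⟨(Stmt10.T_le_iff hρ hint h2 (by rw [hmass']; exact h3)).2 h1, h2, h3⟩
      rw [hset]
      have hsub1 : Set.Iic (Stmt10.F ρ x) ∩ Set.Ioo (0:ℝ) (N:ℝ)
          ⊆ Set.Icc (0:ℝ) (Stmt10.F ρ x) := by
        rintro s ⟨h1, h2, h3⟩
        exact ⟨h2.le, h1⟩
      have hsub2 : Set.Ioo (0:ℝ) (Stmt10.F ρ x)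
          ⊆ Set.Iic (Stmt10.F ρ x) ∩ Set.Ioo (0:ℝ) (N:ℝ) := by
        rintro s ⟨h1, h2⟩
        exact ⟨h2.le, h1, lt_of_lt_of_le h2 (hFN x)⟩
      refine le_antisymm ?_ ?_
      · have hm := measure_mono (μ := volume) hsub1
        rwa [Real.volume_Icc, sub_zero] at hm
      · have hm := measure_mono (μ := volume) hsub2
        rwa [Real.volume_Ioo, sub_zero] at hm
    haveI hfin : IsFiniteMeasure (Measure.map Tf (volume.restrict (Set.Ioo (0:ℝ) (N:ℝ)))) := by
      constructor
      rw [Measure.map_apply_of_aemeasurable hTaeN MeasurableSet.univ,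
        Measure.restrict_apply' measurableSet_Ioo, Set.preimage_univ, Set.univ_inter]
      exact measure_Ioo_lt_top
    have hext : Measure.map Tf (volume.restrict (Set.Ioo (0:ℝ) (N:ℝ)))
        = volume.withDensity fun y => ENNReal.ofReal (ρ y) := by
      refine MeasureTheory.Measure.ext_of_Iic _ _ fun x => ?_
      rw [Measure.map_apply_of_aemeasurable hTaeN measurableSet_Iic,
        Measure.restrict_apply' measurableSet_Ioo, hiic x,
        withDensity_apply _ measurableSet_Iic,
        ← ofReal_integral_eq_lintegral_ofReal hint.integrableOn (ae_of_all _ hρ)]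
      rfl
    have hν₁ : volume (Tf ⁻¹' A ∩ Set.Ioo (0:ℝ) (N:ℝ)) = ∫⁻ y in A, ENNReal.ofReal (ρ y) := by
      rw [← Measure.restrict_apply' measurableSet_Ioo,
        ← Measure.map_apply_of_aemeasurable hTaeN hA, hext, withDensity_apply _ hA]
    calc (∑ i : Fin N, P {x | x i ∈ A}) = ∑ i : Fin N, P₀ {x | x i ∈ A} := hstep1
      _ = ∑ i : Fin N, volume (Tf ⁻¹' A ∩ Set.Ioo (((i:ℕ):ℝ)) (((i:ℕ):ℝ) + 1)) :=
          Finset.sum_congr rfl fun i _ => hP₀i i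
      _ = volume (Tf ⁻¹' A ∩ Set.Ioo (0:ℝ) (N:ℝ)) := hsum
      _ = ∫⁻ y in A, ENNReal.ofReal (ρ y) := hν₁
  refine ⟨P, hPprob, hsymm, hobd, hae, ?_⟩
  -- interaction energy
  have hw0 : ∀ᵐ x ∂P,
      pairSum (fun x : ℝ => if |x| < r₀ then (⊤ : EReal) else 0) N x = 0 := by
    filter_upwards [hae] with x hx
    unfold pairSum
    refine Finset.sum_eq_zero fun p hp => ?_
    simp only [Finset.mem_filter] at hp
    have hne : ¬ |x p.1 - x p.2| < r₀ := not_lt.2 (hx p.1 p.2 (ne_of_lt hp.2))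
    simp [hne]
  unfold interactionEnergy eIntegral
  have h1 : (∫⁻ x, erealPos (pairSum
      (fun x : ℝ => if |x| < r₀ then (⊤ : EReal) else 0) N x) ∂P) = 0 := by
    have heq : (fun x => erealPos (pairSum
        (fun x : ℝ => if |x| < r₀ then (⊤ : EReal) else 0) N x)) =ᵐ[P] fun _ => 0 :=
      hw0.mono fun x hx => by
        show erealPos (pairSum (fun x : ℝ => if |x| < r₀ then (⊤ : EReal) else 0) N x) = 0
        rw [hx]
        simp [erealPos]
    rw [lintegral_congr_ae heq, lintegral_zero]
  have h2 : (∫⁻ x, erealPos (-(pairSum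
      (fun x : ℝ => if |x| < r₀ then (⊤ : EReal) else 0) N x)) ∂P) = 0 := by
    have heq : (fun x => erealPos (-(pairSum
        (fun x : ℝ => if |x| < r₀ then (⊤ : EReal) else 0) N x))) =ᵐ[P] fun _ => 0 :=
      hw0.mono fun x hx => by
        show erealPos (-(pairSum (fun x : ℝ => if |x| < r₀ then (⊤ : EReal) else 0) N x)) = 0
        rw [hx]
        simp [erealPos]
    rw [lintegral_congr_ae heq, lintegral_zero]
  rw [h1, h2]
  simp
end
end

section
/- Let d ≥ 1 and α > d. Let 𝒞 = (−1/2, 1/2)^d be the unit cube and let (Q_j) be any finite or countable collection of pairwise disjoint axis-parallel open cubes in ℝ^d such that |Q_j| ≥ 1 and dist(𝒞, Q_j) ≥ 1/2 for every j. Then ∑_j dist(𝒞, Q_j)^{−α} ≤ 3^α 2^{7d} d² / (|𝕊^{d−1}| (α − d)), where |𝕊^{d−1}| is the surface measure of the unit sphere in ℝ^d. -/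
open MeasureTheory Filter
open scoped ENNReal BigOperators

noncomputable section

open ClDFT

/-- The open axis-parallel cube `x + l·(-1/2,1/2)^d`. -/
def cube (d : ℕ) (x : Pt d) (l : ℝ) : Set (Pt d) :=
  {y | ∀ i, y i - x i ∈ Set.Ioo (-(l / 2)) (l / 2)}

/-- Distance between two sets. -/
noncomputable def setDist {X : Type*} [PseudoMetricSpace X] (A B : Set X) : ℝ :=
  sInf (Set.image2 dist A B)

/-- The surface measure `|𝕊^{d-1}| = d·|B_1|` of the unit sphere of `ℝ^d`. -/
noncomputable def sphereArea (d : ℕ) : ℝ :=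
  d * (volume (Metric.ball (0 : Pt d) 1)).toReal

section AuxStatement12
open Real

lemma gamma_lb : ∀ d : ℕ, ((d:ℝ)/6) ^ ((d:ℝ)/2) ≤ Real.Gamma ((d:ℝ)/2 + 1) := by
  intro d
  induction d using Nat.twoStepInduction with
  | zero => simp [Real.Gamma_one]
  | one =>
    have h1 : ((1:ℝ)/2 + 1) = 1/2 + 1 := rfl
    rw [show ((1:ℕ):ℝ)/2 + 1 = (1/2 : ℝ) + 1 by norm_num, Real.Gamma_add_one (by norm_num),
      Real.Gamma_one_half_eq]
    have h2 : ((1:ℕ):ℝ)/6 = (1/6 : ℝ) := by norm_num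
    rw [h2, show ((1:ℕ):ℝ)/2 = (1/2:ℝ) by norm_num, ← Real.sqrt_eq_rpow]
    have : Real.sqrt (1/6) ≤ Real.sqrt (π/4) := by
      apply Real.sqrt_le_sqrt; nlinarith [Real.pi_gt_three]
    calc Real.sqrt (1/6) ≤ Real.sqrt (π/4) := this
      _ = 1/2 * Real.sqrt π := by
          rw [show (π/4 : ℝ) = π * (1/2)^2 by ring, Real.sqrt_mul' _ (by positivity),
            Real.sqrt_sq (by norm_num)]; ring
  | more d ih _ =>
    have hd2 : ((d+2:ℕ):ℝ) = (d:ℝ) + 2 := by push_cast; ring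
    have hG : Real.Gamma (((d+2:ℕ):ℝ)/2 + 1) = ((d:ℝ)/2 + 1) * Real.Gamma ((d:ℝ)/2 + 1) := by
      rw [hd2, show ((d:ℝ)+2)/2 + 1 = ((d:ℝ)/2 + 1) + 1 by ring,
        Real.Gamma_add_one (by positivity)]
    rw [hG, hd2]
    rcases Nat.eq_zero_or_pos d with h0 | hdpos
    · subst h0
      rw [show (((0:ℕ):ℝ)+2)/6 = (1/3 : ℝ) by norm_num, show (((0:ℕ):ℝ)+2)/2 = (1:ℝ) by norm_num,
        Real.rpow_one, show (((0:ℕ):ℝ)/2 + 1) = (1:ℝ) by norm_num, Real.Gamma_one]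
      norm_num
    · have hd1 : (1:ℝ) ≤ (d:ℝ) := by exact_mod_cast hdpos
      -- goal: (((d+2)/6)) ^ (((d:ℝ)+2)/2) ≤ ((d:ℝ)/2+1) * Γ
      have key : (((d:ℝ)+2)/6) ^ (((d:ℝ)+2)/2) ≤ ((d:ℝ)/2 + 1) * ((d:ℝ)/6) ^ ((d:ℝ)/2) := by
        have e1 : (((d:ℝ)+2)/6) ^ (((d:ℝ)+2)/2)
            = (((d:ℝ)+2)/6) ^ ((d:ℝ)/2) * (((d:ℝ)+2)/6) := by
          rw [show ((d:ℝ)+2)/2 = (d:ℝ)/2 + 1 by ring, Real.rpow_add_one (by positivity)]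
        rw [e1]
        have e2 : (((d:ℝ)+2)/6) ^ ((d:ℝ)/2)
            = (((d:ℝ)+2)/(d:ℝ)) ^ ((d:ℝ)/2) * ((d:ℝ)/6) ^ ((d:ℝ)/2) := by
          rw [← Real.mul_rpow (by positivity) (by positivity)]
          congr 1; field_simp
        rw [e2]
        have e3 : (((d:ℝ)+2)/(d:ℝ)) ^ ((d:ℝ)/2) ≤ 3 := by
          have h23 : ((d:ℝ)+2)/(d:ℝ) = 1 + 2/(d:ℝ) := by field_simp
          have h4 : (1 + 2/(d:ℝ)) ≤ Real.exp (2/(d:ℝ)) := by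
            have := Real.add_one_le_exp (2/(d:ℝ)); linarith
          calc (((d:ℝ)+2)/(d:ℝ)) ^ ((d:ℝ)/2)
              ≤ Real.exp (2/(d:ℝ)) ^ ((d:ℝ)/2) := by
                apply Real.rpow_le_rpow (by positivity) (by rw [h23]; exact h4) (by positivity)
            _ = Real.exp (2/(d:ℝ) * ((d:ℝ)/2)) := by
                rw [← Real.exp_one_rpow (2/(d:ℝ)), ← Real.rpow_mul (le_of_lt (Real.exp_pos 1)),
                  Real.exp_one_rpow]
            _ = Real.exp 1 := by congr 1; field_simp
            _ ≤ 3 := by linarith [Real.exp_one_lt_d9]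
        calc (((d:ℝ)+2)/(d:ℝ)) ^ ((d:ℝ)/2) * ((d:ℝ)/6) ^ ((d:ℝ)/2) * (((d:ℝ)+2)/6)
            ≤ 3 * ((d:ℝ)/6) ^ ((d:ℝ)/2) * (((d:ℝ)+2)/6) := by
              apply mul_le_mul_of_nonneg_right (mul_le_mul_of_nonneg_right e3 (by positivity))
                (by positivity)
          _ = ((d:ℝ)/2 + 1) * ((d:ℝ)/6) ^ ((d:ℝ)/2) := by ring
      calc (((d:ℝ)+2)/6) ^ (((d:ℝ)+2)/2) ≤ ((d:ℝ)/2 + 1) * ((d:ℝ)/6) ^ ((d:ℝ)/2) := key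
        _ ≤ ((d:ℝ)/2 + 1) * Real.Gamma ((d:ℝ)/2 + 1) := by
            apply mul_le_mul_of_nonneg_left ih (by positivity)

lemma omega_le (d : ℕ) (hd : 1 ≤ d) :
    (volume (Metric.ball (0 : Pt d) 1)).toReal ≤ (6*π/(d:ℝ)) ^ ((d:ℝ)/2) := by
  have : Nonempty (Fin d) := ⟨⟨0, hd⟩⟩
  have hvol := EuclideanSpace.volume_ball (Fin d) 0 1
  rw [Fintype.card_fin] at hvol
  have hG : 0 < Real.Gamma ((d:ℝ)/2 + 1) := Real.Gamma_pos_of_pos (by positivity)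
  rw [hvol]
  rw [ENNReal.ofReal_one, one_pow, one_mul, ENNReal.toReal_ofReal (by positivity)]
  rw [div_le_iff₀ hG]
  have hpi : Real.sqrt π ^ d = π ^ ((d:ℝ)/2) := by
    rw [Real.sqrt_eq_rpow, ← Real.rpow_natCast (π ^ ((1:ℝ)/2)) d,
      ← Real.rpow_mul (le_of_lt Real.pi_pos)]
    congr 1; ring
  calc Real.sqrt π ^ d = π ^ ((d:ℝ)/2) := hpi
    _ = (6*π/(d:ℝ)) ^ ((d:ℝ)/2) * ((d:ℝ)/6) ^ ((d:ℝ)/2) := by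
        rw [← Real.mul_rpow (by positivity) (by positivity)]
        congr 1
        have : (d:ℝ) ≠ 0 := by positivity
        field_simp
    _ ≤ (6*π/(d:ℝ)) ^ ((d:ℝ)/2) * Real.Gamma ((d:ℝ)/2 + 1) := by
        apply mul_le_mul_of_nonneg_left (gamma_lb d) (by positivity)

lemma xexp23 {x : ℝ} (hx : 0 ≤ x) : x * (2/3:ℝ) ^ x ≤ 6/5 := by
  have hexp13 : Real.exp (1/3) ≤ 3/2 := by
    have e3 : Real.exp (1/3) ^ (3:ℕ) = Real.exp 1 := by
      rw [← Real.exp_nat_mul]; norm_num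
    by_contra hcon
    push_neg at hcon
    have h32 : ((3:ℝ)/2)^(3:ℕ) < Real.exp (1/3) ^ (3:ℕ) :=
      pow_lt_pow_left₀ hcon (by norm_num) (by norm_num)
    rw [e3] at h32
    have := Real.exp_one_lt_d9
    norm_num at h32
    linarith
  have h23 : (2/3:ℝ) ≤ Real.exp (-(1/3)) := by
    rw [Real.exp_neg]
    rw [le_inv_comm₀ (by norm_num) (Real.exp_pos _)]
    exact le_trans hexp13 (by norm_num)
  have h1 : (2/3:ℝ) ^ x ≤ Real.exp (-(x/3)) := by
    calc (2/3:ℝ) ^ x ≤ Real.exp (-(1/3)) ^ x :=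
          Real.rpow_le_rpow (by norm_num) h23 hx
      _ = Real.exp (-(x/3)) := by
          rw [← Real.exp_one_rpow (-(1/3)), ← Real.rpow_mul (le_of_lt (Real.exp_pos 1)),
            Real.exp_one_rpow]
          congr 1; ring
  have h2 : x * Real.exp (-(x/3)) ≤ 6/5 := by
    have ha := Real.add_one_le_exp (x/3 - 1)
    have hb : Real.exp (x/3 - 1) = Real.exp (x/3) / Real.exp 1 := by
      rw [Real.exp_sub]
    rw [hb] at ha
    have hE : 0 < Real.exp (x/3) := Real.exp_pos _
    have hinv : Real.exp (-(x/3)) = (Real.exp (x/3))⁻¹ := Real.exp_neg _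
    rw [hinv]
    rw [mul_inv_le_iff₀ hE]
    have he1 : (2.7182818283:ℝ) < Real.exp 1 := Real.exp_one_gt_d9
    have : x * Real.exp 1 ≤ 3 * Real.exp (x/3) := by
      have := mul_le_mul_of_nonneg_right ha (le_of_lt (Real.exp_pos 1))
      have h3 : (x/3 - 1 + 1) * Real.exp 1 = x/3 * Real.exp 1 := by ring
      calc x * Real.exp 1 = 3 * ((x/3 - 1 + 1) * Real.exp 1) := by ring
        _ ≤ 3 * (Real.exp (x/3) / Real.exp 1 * Real.exp 1) := by
            apply mul_le_mul_of_nonneg_left _ (by norm_num)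
            exact mul_le_mul_of_nonneg_right ha (le_of_lt (Real.exp_pos 1))
        _ = 3 * Real.exp (x/3) := by
            field_simp
    nlinarith [hx, hE]
  calc x * (2/3:ℝ) ^ x ≤ x * Real.exp (-(x/3)) :=
        mul_le_mul_of_nonneg_left h1 hx
    _ ≤ 6/5 := h2

lemma key_ineq (d : ℕ) (hd : 1 ≤ d) {α : ℝ} (hα : (d:ℝ) < α) {ω : ℝ} (hω : 0 < ω)
    (hωle : ω ≤ (6*π/(d:ℝ)) ^ ((d:ℝ)/2)) :
    ω * ((7 * Real.sqrt d) ^ d * ((2:ℝ) ^ (α - (d:ℝ)) * (α / (α - (d:ℝ)))))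
      ≤ (3:ℝ) ^ α * 2 ^ (7*d) * (d:ℝ)^2 / (((d:ℝ) * ω) * (α - (d:ℝ))) := by
  have hd1 : (1:ℝ) ≤ (d:ℝ) := by exact_mod_cast hd
  have hx : (0:ℝ) < α - d := by linarith
  have hα0 : 0 < α := by linarith
  -- Step 1 : ω^2 * (7√d)^d ≤ 133^d
  have step1 : ω^2 * (7 * Real.sqrt d) ^ d ≤ 133 ^ d := by
    have hω2 : ω^2 ≤ (6*π/(d:ℝ)) ^ ((d:ℝ)) := by
      calc ω^2 ≤ ((6*π/(d:ℝ)) ^ ((d:ℝ)/2))^2 := by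
            apply pow_le_pow_left₀ (le_of_lt hω) hωle
        _ = (6*π/(d:ℝ)) ^ ((d:ℝ)) := by
            rw [← Real.rpow_natCast ((6*π/(d:ℝ)) ^ ((d:ℝ)/2)) 2,
              ← Real.rpow_mul (by positivity)]
            norm_num
    have hsd : (7 * Real.sqrt d) ^ d = 7^d * (d:ℝ) ^ ((d:ℝ)/2) := by
      rw [mul_pow]
      congr 1
      rw [Real.sqrt_eq_rpow, ← Real.rpow_natCast ((d:ℝ) ^ ((1:ℝ)/2)) d,
        ← Real.rpow_mul (by positivity)]
      congr 1; ring
    calc ω^2 * (7 * Real.sqrt d) ^ d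
        ≤ (6*π/(d:ℝ)) ^ ((d:ℝ)) * (7^d * (d:ℝ) ^ ((d:ℝ)/2)) := by
          rw [hsd]
          apply mul_le_mul_of_nonneg_right hω2 (by positivity)
      _ = (6*π)^((d:ℝ)) * 7^d * ((d:ℝ) ^ ((d:ℝ)/2) / (d:ℝ) ^ ((d:ℝ))) := by
          rw [Real.div_rpow (by positivity) (by positivity)]
          ring
      _ ≤ (6*π)^((d:ℝ)) * 7^d * 1 := by
          apply mul_le_mul_of_nonneg_left _ (by positivity)
          rw [div_le_one (by positivity)]
          exact Real.rpow_le_rpow_of_exponent_le hd1 (by linarith)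
      _ = (6*π)^d * 7^d := by
          rw [Real.rpow_natCast]; ring
      _ ≤ 19^d * 7^d := by
          apply mul_le_mul_of_nonneg_right _ (by positivity)
          apply pow_le_pow_left₀ (by positivity)
          nlinarith [Real.pi_lt_d2]
      _ = 133 ^ d := by rw [← mul_pow]; norm_num
  -- Step 2 : 2^(α-d) * α ≤ 3^(α-d) * (11/5 * d)
  have step2 : (2:ℝ) ^ (α - (d:ℝ)) * α ≤ (3:ℝ) ^ (α - (d:ℝ)) * (11/5 * (d:ℝ)) := by
    set x := α - (d:ℝ) with hxdef
    have hx0 : 0 ≤ x := le_of_lt hx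
    have h23 : (2:ℝ) ^ x = (3:ℝ) ^ x * (2/3:ℝ) ^ x := by
      rw [← Real.mul_rpow (by norm_num) (by norm_num)]
      norm_num
    rw [h23, mul_assoc]
    apply mul_le_mul_of_nonneg_left _ (by positivity)
    have hαx : α = x + (d:ℝ) := by rw [hxdef]; ring
    rw [hαx]
    have h1 : (2/3:ℝ) ^ x * (x + (d:ℝ)) = x * (2/3:ℝ)^x + (d:ℝ) * (2/3:ℝ)^x := by ring
    rw [h1]
    have h2 : (2/3:ℝ) ^ x ≤ 1 := Real.rpow_le_one (by norm_num) (by norm_num) hx0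
    have h3 := xexp23 hx0
    nlinarith [Real.rpow_nonneg (show (0:ℝ) ≤ 2/3 by norm_num) x]
  -- Step 3 : combine
  have hP : (0:ℝ) < (7 * Real.sqrt d) ^ d := by positivity
  have h3x : (3:ℝ) ^ α = (3:ℝ) ^ (α - (d:ℝ)) * 3 ^ d := by
    rw [← Real.rpow_natCast (3:ℝ) d, ← Real.rpow_add (by norm_num)]
    congr 1; ring
  have h128 : ((2:ℝ)) ^ (7*d) = 128 ^ d := by
    rw [pow_mul]; norm_num
  have hnum : (133:ℝ) ^ d * (11/5) ≤ 3^d * 128^d := by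
    have : ((3:ℝ)*128) ^ d = 3^d * 128^d := by rw [mul_pow]
    rw [← this]
    calc (133:ℝ)^d * (11/5) ≤ 133^d * ((384:ℝ)/133) := by
          apply mul_le_mul_of_nonneg_left (by norm_num) (by positivity)
      _ ≤ 133^d * (384/133)^d := by
          apply mul_le_mul_of_nonneg_left (le_self_pow₀ (by norm_num) (by omega)) (by positivity)
      _ = (133 * (384/133 : ℝ))^d := by rw [mul_pow]
      _ = (384:ℝ)^d := by norm_num
      _ = ((3:ℝ)*128)^d := by norm_num
  -- main chain
  have main : ω^2 * (7 * Real.sqrt d) ^ d * ((2:ℝ)^(α-(d:ℝ)) * α) * (d:ℝ)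
      ≤ (3:ℝ)^α * 2^(7*d) * (d:ℝ)^2 := by
    calc ω^2 * (7 * Real.sqrt d) ^ d * ((2:ℝ)^(α-(d:ℝ)) * α) * (d:ℝ)
        ≤ 133^d * ((3:ℝ)^(α-(d:ℝ)) * (11/5 * (d:ℝ))) * (d:ℝ) := by
          apply mul_le_mul_of_nonneg_right _ (by positivity)
          apply mul_le_mul step1 step2 (by positivity) (by positivity)
      _ = (133^d * (11/5)) * (3:ℝ)^(α-(d:ℝ)) * (d:ℝ)^2 := by ring
      _ ≤ (3^d * 128^d) * (3:ℝ)^(α-(d:ℝ)) * (d:ℝ)^2 := by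
          apply mul_le_mul_of_nonneg_right _ (by positivity)
          exact mul_le_mul_of_nonneg_right hnum (by positivity)
      _ = (3:ℝ)^α * 2^(7*d) * (d:ℝ)^2 := by
          rw [h3x, h128]; ring
  -- rearrange to division form
  rw [le_div_iff₀ (by positivity)]
  have expand : ω * ((7 * Real.sqrt d) ^ d * ((2:ℝ) ^ (α - (d:ℝ)) * (α / (α - (d:ℝ)))))
      * ((d:ℝ) * ω * (α - (d:ℝ)))
      = ω^2 * (7 * Real.sqrt d) ^ d * ((2:ℝ)^(α-(d:ℝ)) * α) * (d:ℝ)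
        * ((α - (d:ℝ))⁻¹ * (α - (d:ℝ))) := by
    field_simp
  rw [expand, inv_mul_cancel₀ (ne_of_gt hx), mul_one]
  exact main

lemma lint_rpow {T p : ℝ} (hT : 0 < T) (hp1 : -1 < p) (hp0 : p < 0) :
    ∫⁻ t in Set.Ioo (0:ℝ) T, ENNReal.ofReal (t ^ p)
      = ENNReal.ofReal (T ^ (p+1) / (p+1)) := by
  have hint : IntervalIntegrable (fun t : ℝ => t ^ p) volume 0 T :=
    intervalIntegral.intervalIntegrable_rpow' hp1
  have hIoc : IntegrableOn (fun t : ℝ => t ^ p) (Set.Ioc 0 T) volume := by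
    rw [← intervalIntegrable_iff_integrableOn_Ioc_of_le (le_of_lt hT)]
    exact hint
  have hIoo : IntegrableOn (fun t : ℝ => t ^ p) (Set.Ioo 0 T) volume :=
    hIoc.mono_set Set.Ioo_subset_Ioc_self
  rw [← MeasureTheory.ofReal_integral_eq_lintegral_ofReal hIoo]
  · congr 1
    rw [← MeasureTheory.integral_Ioc_eq_integral_Ioo,
      ← intervalIntegral.integral_of_le (le_of_lt hT),
      integral_rpow (Or.inl hp1)]
    rw [Real.zero_rpow (by linarith)]
    ring
  · filter_upwards [MeasureTheory.self_mem_ae_restrict measurableSet_Ioo] with t ht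
    exact Real.rpow_nonneg (le_of_lt ht.1) p

lemma cube_eq_pi (d : ℕ) (x : Pt d) (l : ℝ) :
    cube d x l = ((MeasurableEquiv.toLp 2 (Fin d → ℝ)).symm) ⁻¹'
      (Set.univ.pi fun k => Set.Ioo (x k - l/2) (x k + l/2)) := by
  ext z
  have hek : ∀ k : Fin d, ((MeasurableEquiv.toLp 2 (Fin d → ℝ)).symm) z k = z k := fun _ => rfl
  simp only [cube, Set.mem_setOf_eq, Set.mem_preimage, Set.mem_pi, Set.mem_univ, true_implies,
    Set.mem_Ioo, hek]
  constructor
  · intro h k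
    obtain ⟨h1, h2⟩ := h k
    constructor <;> [linarith; linarith]
  · intro h k
    obtain ⟨h1, h2⟩ := h k
    constructor <;> [linarith; linarith]

lemma measurableSet_cube (d : ℕ) (x : Pt d) (l : ℝ) : MeasurableSet (cube d x l) := by
  rw [cube_eq_pi]
  exact (MeasurableSet.univ_pi fun k => measurableSet_Ioo).preimage
    ((MeasurableEquiv.toLp 2 (Fin d → ℝ)).symm).measurable

lemma volume_cube_one (d : ℕ) (x : Pt d) : volume (cube d x 1) = 1 := by
  rw [cube_eq_pi]
  rw [(EuclideanSpace.volume_preserving_symm_measurableEquiv_toLp (Fin d)).measure_preimage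
    ((MeasurableSet.univ_pi fun k => measurableSet_Ioo).nullMeasurableSet)]
  rw [volume_pi_pi]
  simp [Real.volume_Ioo]
  norm_num

lemma mem_cube_self (d : ℕ) (x : Pt d) {l : ℝ} (hl : 0 < l) : x ∈ cube d x l := by
  intro k
  simp [Set.mem_Ioo]
  linarith

lemma norm_le_sqrt_of_coords (d : ℕ) (v : Pt d) (a : ℝ) (ha : 0 ≤ a)
    (h : ∀ k, |v k| ≤ a) : ‖v‖ ≤ Real.sqrt d * a := by
  rw [EuclideanSpace.norm_eq]
  have hb : ∑ i, ‖v i‖ ^ 2 ≤ (d:ℝ) * a^2 := by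
    calc ∑ i, ‖v i‖ ^ 2 ≤ ∑ _i : Fin d, a^2 := by
          apply Finset.sum_le_sum
          intro i _
          rw [Real.norm_eq_abs]
          exact pow_le_pow_left₀ (abs_nonneg _) (h i) 2
      _ = (d:ℝ) * a^2 := by
          rw [Finset.sum_const, Finset.card_univ, Fintype.card_fin, nsmul_eq_mul]
  calc Real.sqrt (∑ i, ‖v i‖ ^ 2) ≤ Real.sqrt ((d:ℝ) * a^2) := Real.sqrt_le_sqrt hb
    _ = Real.sqrt d * a := by
        rw [Real.sqrt_mul (by positivity), Real.sqrt_sq ha]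

lemma exists_unit_subcube (d : ℕ) (hd : 1 ≤ d) (yc : Pt d) {l : ℝ} (hl : 1 ≤ l) :
    ∃ c : Pt d, cube d c 1 ⊆ cube d yc l ∧
      ∀ z ∈ cube d c 1, ‖z‖ ≤ setDist (cube d 0 1) (cube d yc l) + 3 * Real.sqrt d := by
  set s := setDist (cube d 0 1) (cube d yc l) with hs
  have hl0 : (0:ℝ) < l := by linarith
  have hne : (Set.image2 dist (cube d 0 1) (cube d yc l)).Nonempty :=
    ⟨_, Set.mem_image2_of_mem (mem_cube_self d 0 one_pos) (mem_cube_self d yc hl0)⟩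
  obtain ⟨r, hr, hrs⟩ := exists_lt_of_csInf_lt hne (lt_add_of_pos_right (sInf _) (by norm_num :
    (0:ℝ) < 1/4))
  obtain ⟨x₀, hx₀, q, hq, rfl⟩ := hr
  -- clamped center
  set c : Pt d := WithLp.toLp 2 (fun k => max (yc k - (l-1)/2) (min (q k) (yc k + (l-1)/2))) with hc
  have hAB : ∀ k : Fin d, yc k - (l-1)/2 ≤ yc k + (l-1)/2 := fun k => by linarith
  have hcyc : ∀ k, |c k - yc k| ≤ (l-1)/2 := by
    intro k
    rw [abs_le]
    constructor
    · have : yc k - (l-1)/2 ≤ c k := le_max_left _ _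
      linarith
    · have : c k ≤ yc k + (l-1)/2 := max_le (hAB k) (min_le_right _ _)
      linarith
  have hcq : ∀ k, |c k - q k| ≤ 1/2 := by
    intro k
    have hqk := hq k
    simp only [Set.mem_Ioo] at hqk
    rw [abs_le]
    constructor
    · -- q k - 1/2 ≤ c k
      have h1 : q k - 1/2 ≤ min (q k) (yc k + (l-1)/2) := by
        apply le_min (by linarith)
        linarith [hqk.2]
      have := le_trans h1 (le_max_right (yc k - (l-1)/2) _)
      linarith
    · -- c k ≤ q k + 1/2
      have h2 : yc k - (l-1)/2 ≤ q k + 1/2 := by linarith [hqk.1]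
      have : max (yc k - (l-1)/2) (min (q k) (yc k + (l-1)/2)) ≤ q k + 1/2 :=
        max_le h2 (le_trans (min_le_left (q k) (yc k + (l-1)/2)) (by linarith))
      linarith
  refine ⟨c, ?_, ?_⟩
  · intro z hz k
    have hzk := hz k
    simp only [Set.mem_Ioo] at hzk ⊢
    have h1 := hcyc k
    rw [abs_le] at h1
    constructor <;> [linarith [hzk.1, h1.1]; linarith [hzk.2, h1.2]]
  · intro z hz
    have hsd1 : (1:ℝ) ≤ Real.sqrt d := by
      rw [show (1:ℝ) = Real.sqrt 1 by simp]
      exact Real.sqrt_le_sqrt (by exact_mod_cast hd)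
    have hzq : ‖z - q‖ ≤ Real.sqrt d * 1 := by
      apply norm_le_sqrt_of_coords d _ _ (by norm_num)
      intro k
      have hzk := hz k
      simp only [Set.mem_Ioo] at hzk
      have h1 := hcq k
      rw [abs_le] at h1 ⊢
      have hsub : (z - q) k = z k - q k := rfl
      rw [hsub]
      constructor <;> [linarith [hzk.1, h1.1]; linarith [hzk.2, h1.2]]
    have hx₀n : ‖x₀‖ ≤ Real.sqrt d * (1/2) := by
      apply norm_le_sqrt_of_coords d _ _ (by norm_num)
      intro k
      have hxk := hx₀ k
      simp only [Set.mem_Ioo] at hxk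
      have hz0 : (0 : Pt d) k = 0 := rfl
      rw [hz0] at hxk
      rw [abs_le]
      constructor <;> [linarith [hxk.1]; linarith [hxk.2]]
    have hqx : ‖q - x₀‖ ≤ s + 1/4 := by
      rw [← dist_eq_norm, dist_comm]
      exact le_of_lt hrs
    calc ‖z‖ = ‖(z - q) + (q - x₀) + x₀‖ := by congr 1; abel
      _ ≤ ‖(z - q) + (q - x₀)‖ + ‖x₀‖ := norm_add_le _ _
      _ ≤ ‖z - q‖ + ‖q - x₀‖ + ‖x₀‖ := by
          linarith [norm_add_le (z - q) (q - x₀)]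
      _ ≤ Real.sqrt d * 1 + (s + 1/4) + Real.sqrt d * (1/2) := by linarith
      _ ≤ s + 3 * Real.sqrt d := by linarith


/-- **summing inverse distances to disjoint cubes, `α > d`.** -/
theorem statement12 (d : ℕ) (hd : 1 ≤ d) (α : ℝ) (hα : (d : ℝ) < α)
    (ι : Type) [Countable ι] (y : ι → Pt d) (lam : ι → ℝ)
    (hlam : ∀ i, 0 < lam i) (hvol : ∀ i, 1 ≤ lam i ^ d)
    (hdisj : Pairwise fun i j => Disjoint (cube d (y i) (lam i)) (cube d (y j) (lam j)))
    (hdist : ∀ i, 1 / 2 ≤ setDist (cube d 0 1) (cube d (y i) (lam i))) :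
    ∑' i, ENNReal.ofReal (setDist (cube d 0 1) (cube d (y i) (lam i)) ^ (-α))
      ≤ ENNReal.ofReal
          ((3 : ℝ) ^ α * 2 ^ (7 * d) * d ^ 2 / (sphereArea d * (α - d))) := by
  classical
  have hd1 : (1:ℝ) ≤ (d:ℝ) := by exact_mod_cast hd
  have hα0 : (0:ℝ) < α := lt_of_le_of_lt (by positivity) hα
  set sd : ℝ := Real.sqrt d with hsd
  have hsd1 : (1:ℝ) ≤ sd := by
    rw [hsd, show (1:ℝ) = Real.sqrt 1 by simp]
    exact Real.sqrt_le_sqrt hd1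
  set t : ι → ℝ := fun i => setDist (cube d 0 1) (cube d (y i) (lam i)) with htdef
  set M : Pt d → ℝ := fun z => max (1/2) (‖z‖ - 3*sd) with hMdef
  have hMpos : ∀ z, 0 < M z := fun z => lt_of_lt_of_le (by norm_num) (le_max_left _ _)
  set f : Pt d → ℝ := fun z => Real.exp (Real.log (M z) * (-α)) with hfdef
  have hfeq : ∀ z, f z = (M z) ^ (-α) := fun z => (Real.rpow_def_of_pos (hMpos z) _).symm
  have hMcont : Continuous M := continuous_const.max (continuous_norm.sub continuous_const)
  have hfcont : Continuous f :=
    Real.continuous_exp.comp ((hMcont.log fun z => (hMpos z).ne').mul continuous_const)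
  have hfnn : ∀ z, 0 ≤ f z := fun z => (Real.exp_pos _).le
  have hlam1 : ∀ i, 1 ≤ lam i := by
    intro i
    by_contra h
    push_neg at h
    have := pow_lt_one₀ (le_of_lt (hlam i)) h (show d ≠ 0 by omega)
    linarith [hvol i]
  -- unit subcubes
  choose c hcsub hcnorm using fun i => exists_unit_subcube d hd (y i) (hlam1 i)
  -- per-index estimate
  have h1 : ∀ i, ENNReal.ofReal (t i ^ (-α)) ≤ ∫⁻ z in cube d (c i) 1, ENNReal.ofReal (f z) := by
    intro i
    have hptw : ∀ z ∈ cube d (c i) 1,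
        ENNReal.ofReal (t i ^ (-α)) ≤ ENNReal.ofReal (f z) := by
      intro z hz
      apply ENNReal.ofReal_le_ofReal
      rw [hfeq z]
      apply Real.rpow_le_rpow_of_nonpos (hMpos z) _ (neg_nonpos.mpr (le_of_lt hα0))
      apply max_le (hdist i)
      have := hcnorm i z hz
      linarith
    calc ENNReal.ofReal (t i ^ (-α))
        = ENNReal.ofReal (t i ^ (-α)) * volume (cube d (c i) 1) := by
          rw [volume_cube_one, mul_one]
      _ = ∫⁻ _z in cube d (c i) 1, ENNReal.ofReal (t i ^ (-α)) := by
          rw [MeasureTheory.setLIntegral_const]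
      _ ≤ ∫⁻ z in cube d (c i) 1, ENNReal.ofReal (f z) :=
          MeasureTheory.setLIntegral_mono' (measurableSet_cube d (c i) 1) hptw
  have h2 : ∑' i, ENNReal.ofReal (t i ^ (-α)) ≤ ∫⁻ z, ENNReal.ofReal (f z) := by
    calc ∑' i, ENNReal.ofReal (t i ^ (-α))
        ≤ ∑' i, ∫⁻ z in cube d (c i) 1, ENNReal.ofReal (f z) := ENNReal.tsum_le_tsum h1
      _ = ∫⁻ z in ⋃ i, cube d (c i) 1, ENNReal.ofReal (f z) :=
          (MeasureTheory.lintegral_iUnion (fun i => measurableSet_cube d (c i) 1)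
            (fun i j hij => ((hdisj hij).mono (hcsub i) (hcsub j))) _).symm
      _ ≤ ∫⁻ z, ENNReal.ofReal (f z) := MeasureTheory.setLIntegral_le_lintegral _ _
  -- layer cake
  have h3 : ∫⁻ z, ENNReal.ofReal (f z) = ∫⁻ s in Set.Ioi (0:ℝ), volume {a | s < f a} :=
    MeasureTheory.lintegral_eq_lintegral_meas_lt volume (Filter.Eventually.of_forall hfnn)
      hfcont.measurable.aemeasurable
  set T : ℝ := (2:ℝ) ^ α with hTdef
  have hT0 : (0:ℝ) < T := Real.rpow_pos_of_pos (by norm_num) α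
  set p : ℝ := -((d:ℝ)/α) with hpdef
  have hp1 : -1 < p := by
    rw [hpdef, neg_lt, neg_neg]
    rw [div_lt_one hα0]
    exact hα
  have hp0 : p < 0 := by
    rw [hpdef, neg_lt_zero]
    positivity
  set C : ℝ := (7*sd)^d with hCdef
  have hC0 : (0:ℝ) < C := by positivity
  set ωe : ℝ≥0∞ := volume (Metric.ball (0 : Pt d) 1) with hωe
  have hωefin : ωe ≠ ⊤ := (MeasureTheory.measure_ball_lt_top).ne
  have hωepos : ωe ≠ 0 := (Metric.measure_ball_pos volume 0 one_pos).ne'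
  have h4 : ∀ s ∈ Set.Ioi (0:ℝ), volume {a | s < f a}
      ≤ (Set.Iio T).indicator (fun s => ωe * ENNReal.ofReal (C * s ^ p)) s := by
    intro s hs
    have hspos : (0:ℝ) < s := hs
    by_cases hsT : s < T
    · rw [Set.indicator_of_mem (Set.mem_Iio.mpr hsT)]
      set u : ℝ := s ^ (-(1/α)) with hu
      have hu0 : (0:ℝ) < u := Real.rpow_pos_of_pos hspos _
      have h2u : s ^ (1/α) < 2 := by
        calc s ^ (1/α) < T ^ (1/α) :=
              Real.rpow_lt_rpow (le_of_lt hspos) hsT (by positivity)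
          _ = 2 := by
              rw [hTdef, ← Real.rpow_mul (by norm_num : (0:ℝ) ≤ 2), mul_one_div,
                div_self (ne_of_gt hα0), Real.rpow_one]
      have huhalf : 1/2 < u := by
        rw [hu, Real.rpow_neg (le_of_lt hspos)]
        rw [lt_inv_comm₀ (by norm_num) (Real.rpow_pos_of_pos hspos _)]
        calc s ^ (1/α) < 2 := h2u
          _ = (1/2)⁻¹ := by norm_num
      have hsubset : {a | s < f a} ⊆ Metric.ball (0 : Pt d) (7*sd*u) := by
        intro a ha
        simp only [Set.mem_setOf_eq] at ha
        have hMa : M a < u := by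
          by_contra hcon
          push_neg at hcon
          have : f a ≤ s := by
            rw [hfeq a]
            calc (M a) ^ (-α) ≤ u ^ (-α) :=
                  Real.rpow_le_rpow_of_nonpos hu0 hcon (neg_nonpos.mpr (le_of_lt hα0))
              _ = s := by
                  rw [hu, ← Real.rpow_mul (le_of_lt hspos),
                    show -(1/α) * -α = 1 by field_simp, Real.rpow_one]
          linarith
        rw [mem_ball_zero_iff]
        have hna : ‖a‖ - 3*sd ≤ M a := le_max_right _ _
        have h3sd : 3*sd < 6*sd*u := by nlinarith
        calc ‖a‖ ≤ M a + 3*sd := by linarith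
          _ < u + 6*sd*u := by linarith
          _ ≤ sd*u + 6*sd*u := by nlinarith
          _ = 7*sd*u := by ring
      calc volume {a | s < f a} ≤ volume (Metric.ball (0 : Pt d) (7*sd*u)) :=
            MeasureTheory.measure_mono hsubset
        _ = ENNReal.ofReal ((7*sd*u) ^ Module.finrank ℝ (Pt d)) * volume (Metric.ball (0 : Pt d) 1) :=
            MeasureTheory.Measure.addHaar_ball_of_pos volume 0 (by positivity)
        _ = ωe * ENNReal.ofReal (C * s ^ p) := by
            rw [finrank_euclideanSpace_fin, mul_comm]
            congr 2
            rw [hCdef, mul_pow]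
            congr 1
            rw [hu, ← Real.rpow_natCast (s ^ (-(1/α))) d, ← Real.rpow_mul (le_of_lt hspos),
              hpdef]
            congr 1
            field_simp
    · rw [Set.indicator_of_notMem (by simpa using hsT)]
      have : {a | s < f a} = ∅ := by
        rw [Set.eq_empty_iff_forall_notMem]
        intro a ha
        simp only [Set.mem_setOf_eq] at ha
        push_neg at hsT
        have hfa : f a ≤ T := by
          rw [hfeq a]
          calc (M a) ^ (-α) ≤ ((1:ℝ)/2) ^ (-α) :=
                Real.rpow_le_rpow_of_nonpos (by norm_num) (le_max_left _ _)
                  (neg_nonpos.mpr (le_of_lt hα0))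
            _ = T := by
                rw [hTdef, one_div, Real.inv_rpow (by norm_num), Real.rpow_neg (by norm_num),
                  inv_inv]
        linarith
      simp [this]
  have hTp : T ^ (p+1) = (2:ℝ) ^ (α - (d:ℝ)) := by
    rw [hTdef, ← Real.rpow_mul (by norm_num : (0:ℝ) ≤ 2)]
    congr 1
    rw [hpdef]
    field_simp
    ring
  have hp1' : p + 1 = (α - (d:ℝ))/α := by
    rw [hpdef]; field_simp; ring
  have h5 : ∫⁻ s in Set.Ioi (0:ℝ), volume {a | s < f a}
      ≤ ωe * ENNReal.ofReal C * ENNReal.ofReal ((2:ℝ) ^ (α - (d:ℝ)) * (α / (α - (d:ℝ)))) := by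
    calc ∫⁻ s in Set.Ioi (0:ℝ), volume {a | s < f a}
        ≤ ∫⁻ s in Set.Ioi (0:ℝ),
            (Set.Iio T).indicator (fun s => ωe * ENNReal.ofReal (C * s ^ p)) s :=
          MeasureTheory.setLIntegral_mono' measurableSet_Ioi h4
      _ = ∫⁻ s in Set.Ioo (0:ℝ) T, ωe * ENNReal.ofReal (C * s ^ p) := by
          rw [MeasureTheory.lintegral_indicator measurableSet_Iio,
            MeasureTheory.Measure.restrict_restrict measurableSet_Iio, Set.Iio_inter_Ioi]
      _ = ∫⁻ s in Set.Ioo (0:ℝ) T, (ωe * ENNReal.ofReal C) * ENNReal.ofReal (s ^ p) := by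
          apply MeasureTheory.lintegral_congr
          intro s
          rw [ENNReal.ofReal_mul (le_of_lt hC0), mul_assoc]
      _ = (ωe * ENNReal.ofReal C) * ∫⁻ s in Set.Ioo (0:ℝ) T, ENNReal.ofReal (s ^ p) :=
          MeasureTheory.lintegral_const_mul' _ _
            (ENNReal.mul_ne_top hωefin ENNReal.ofReal_ne_top)
      _ = ωe * ENNReal.ofReal C * ENNReal.ofReal (T ^ (p+1) / (p+1)) := by
          rw [lint_rpow hT0 hp1 hp0]
      _ = ωe * ENNReal.ofReal C * ENNReal.ofReal ((2:ℝ) ^ (α - (d:ℝ)) * (α / (α - (d:ℝ)))) := by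
          congr 1
          rw [hTp, hp1', div_div_eq_mul_div, mul_div_assoc]
  -- final numeric bound
  set ω : ℝ := ωe.toReal with hω
  have hωpos : 0 < ω := ENNReal.toReal_pos hωepos hωefin
  have hωle : ω ≤ (6*π/(d:ℝ)) ^ ((d:ℝ)/2) := omega_le d hd
  have hkey := key_ineq d hd hα hωpos hωle
  calc ∑' i, ENNReal.ofReal (t i ^ (-α))
      ≤ ∫⁻ z, ENNReal.ofReal (f z) := h2
    _ = ∫⁻ s in Set.Ioi (0:ℝ), volume {a | s < f a} := h3
    _ ≤ ωe * ENNReal.ofReal C * ENNReal.ofReal ((2:ℝ) ^ (α - (d:ℝ)) * (α / (α - (d:ℝ)))) := h5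
    _ = ENNReal.ofReal (ω * (C * ((2:ℝ) ^ (α - (d:ℝ)) * (α / (α - (d:ℝ)))))) := by
        rw [← ENNReal.ofReal_toReal hωefin, ← hω,
          ← ENNReal.ofReal_mul (le_of_lt hωpos), ← ENNReal.ofReal_mul (by positivity)]
        congr 1
        ring
    _ ≤ ENNReal.ofReal ((3 : ℝ) ^ α * 2 ^ (7 * d) * (d:ℝ) ^ 2 / (sphereArea d * (α - d))) := by
        apply ENNReal.ofReal_le_ofReal
        calc ω * (C * ((2:ℝ) ^ (α - (d:ℝ)) * (α / (α - (d:ℝ)))))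
            ≤ (3 : ℝ) ^ α * 2 ^ (7 * d) * (d:ℝ) ^ 2 / (((d:ℝ) * ω) * (α - (d:ℝ))) := hkey
          _ = (3 : ℝ) ^ α * 2 ^ (7 * d) * (d:ℝ) ^ 2 / (sphereArea d * (α - d)) := by
              rw [sphereArea]

end AuxStatement12
end
end
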